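/- arXiv:1312.0655 — 5 statements merged into one kernel-verified Lean document; each statement's English description precedes it below -/
import Mathlib

section
/- For all ε > 0, Δ > 0 and γ ∈ [0,1], the two-dimensional staircase density integrates to one: ∫_{ℝ²} f_γ(x) dx = 1, with the normalization constant a(γ) = 1 / (2Δ² (γ² + (2b/(1−b))γ + (b+b²)/(1−b)²)) where b = e^{−ε}. -/
open MeasureTheory Real Filter
open scoped ENNReal Topology

noncomputable section

/-- The ℓ¹ norm on ℝ². -/
def l1 (x : ℝ × ℝ) : ℝ := |x.1| + |x.2|

/-- Normalization constant of the 2-dimensional staircase density. -/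
def anorm (ε Δ γ : ℝ) : ℝ :=
  1 / (2 * Δ ^ 2 * (γ ^ 2 + 2 * Real.exp (-ε) / (1 - Real.exp (-ε)) * γ +
    (Real.exp (-ε) + Real.exp (-ε) ^ 2) / (1 - Real.exp (-ε)) ^ 2))

/-- The 2-dimensional staircase density with parameter γ; for ‖x‖₁ ∈ [kΔ, (k+γ)Δ) it
equals a(γ)·e^{-kε}, and for ‖x‖₁ ∈ [(k+γ)Δ, (k+1)Δ) it equals a(γ)·e^{-(k+1)ε}. -/
def stair (ε Δ γ : ℝ) (x : ℝ × ℝ) : ℝ :=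
  if l1 x < ((⌊l1 x / Δ⌋ : ℝ) + γ) * Δ then
    anorm ε Δ γ * Real.exp (-(⌊l1 x / Δ⌋ : ℝ) * ε)
  else
    anorm ε Δ γ * Real.exp (-((⌊l1 x / Δ⌋ : ℝ) + 1) * ε)

lemma l1_nonneg (x : ℝ × ℝ) : 0 ≤ l1 x := add_nonneg (abs_nonneg _) (abs_nonneg _)

lemma continuous_l1 : Continuous l1 :=
  (continuous_abs.comp continuous_fst).add (continuous_abs.comp continuous_snd)

lemma vol_l1_lt {r : ℝ} (hr : 0 ≤ r) :
    volume {x : ℝ × ℝ | l1 x < r} = ENNReal.ofReal (2 * r ^ 2) := by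
  have key := MeasureTheory.volume_sum_rpow_lt (ι := Fin 2) (p := 1) le_rfl r
  have hset : {x : Fin 2 → ℝ | (∑ i, |x i| ^ (1:ℝ)) ^ (1 / (1:ℝ)) < r}
      = MeasurableEquiv.finTwoArrow ⁻¹' {x : ℝ × ℝ | l1 x < r} := by
    ext x
    simp [Fin.sum_univ_two, Real.rpow_one, l1, MeasurableEquiv.finTwoArrow]
  rw [hset] at key
  have hpre := (volume_preserving_finTwoArrow ℝ).measure_preimage
    (s := {x : ℝ × ℝ | l1 x < r})
    ((continuous_l1.measurable measurableSet_Iio).nullMeasurableSet)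
  rw [hpre] at key
  rw [key]
  have h2 : Real.Gamma ((Fintype.card (Fin 2) : ℝ) / 1 + 1) = 2 := by
    norm_num
  rw [h2]
  norm_num [Real.Gamma_two]
  rw [mul_comm, show (2:ℝ≥0∞) = ENNReal.ofReal 2 by norm_num,
    ← ENNReal.ofReal_pow hr, ← ENNReal.ofReal_mul (by norm_num)]

lemma vol_annulus {c d : ℝ} (hc : 0 ≤ c) (hcd : c ≤ d) :
    volume {x : ℝ × ℝ | c ≤ l1 x ∧ l1 x < d} = ENNReal.ofReal (2 * d ^ 2 - 2 * c ^ 2) := by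
  have hd : 0 ≤ d := hc.trans hcd
  have hmc : MeasurableSet {x : ℝ × ℝ | l1 x < c} :=
    continuous_l1.measurable measurableSet_Iio
  have hseteq : {x : ℝ × ℝ | c ≤ l1 x ∧ l1 x < d}
      = {x : ℝ × ℝ | l1 x < d} \ {x : ℝ × ℝ | l1 x < c} := by
    ext x; simp only [Set.mem_setOf_eq, Set.mem_diff, not_lt]; tauto
  have hne : volume {x : ℝ × ℝ | l1 x < c} ≠ ⊤ := by
    rw [vol_l1_lt hc]; exact ENNReal.ofReal_ne_top
  have hdiff := measure_diff (μ := volume) (s₁ := {x : ℝ × ℝ | l1 x < d})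
    (s₂ := {x : ℝ × ℝ | l1 x < c}) (fun x hx => lt_of_lt_of_le hx hcd)
    hmc.nullMeasurableSet hne
  rw [hseteq, hdiff, vol_l1_lt hc, vol_l1_lt hd, ← ENNReal.ofReal_sub _ (by positivity)]

/-- The two-dimensional staircase density integrates to one. -/
theorem staircase_integral_one (ε Δ γ : ℝ) (hε : 0 < ε) (hΔ : 0 < Δ)
    (hγ : γ ∈ Set.Icc (0 : ℝ) 1) :
    ∫ x : ℝ × ℝ, stair ε Δ γ x = 1 := by
  obtain ⟨hγ0, hγ1⟩ := hγ
  have hb0 : 0 < Real.exp (-ε) := Real.exp_pos _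
  have hb1 : Real.exp (-ε) < 1 := Real.exp_lt_one_iff.mpr (by linarith)
  set b : ℝ := Real.exp (-ε) with hbdef
  have h1b : (0:ℝ) < 1 - b := by linarith
  set a : ℝ := anorm ε Δ γ with hadef
  have haval : a = 1 / (2 * Δ ^ 2 * (γ ^ 2 + 2 * b / (1 - b) * γ +
      (b + b ^ 2) / (1 - b) ^ 2)) := by rw [hadef, anorm]
  have hD : 0 < γ ^ 2 + 2 * b / (1 - b) * γ + (b + b ^ 2) / (1 - b) ^ 2 := by
    have h1 : 0 ≤ γ ^ 2 := sq_nonneg γ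
    have h2 : 0 ≤ 2 * b / (1 - b) * γ := by positivity
    have h3 : 0 < (b + b ^ 2) / (1 - b) ^ 2 := by positivity
    linarith
  have ha0 : 0 < a := by rw [haval]; positivity
  set A : ℕ → Set (ℝ × ℝ) :=
    fun n => {x | (n:ℝ) * Δ ≤ l1 x ∧ l1 x < ((n:ℝ) + γ) * Δ} with hAdef
  set B : ℕ → Set (ℝ × ℝ) :=
    fun n => {x | ((n:ℝ) + γ) * Δ ≤ l1 x ∧ l1 x < ((n:ℝ) + 1) * Δ} with hBdef
  have hAm : ∀ n, MeasurableSet (A n) := fun n =>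
    continuous_l1.measurable (measurableSet_Ico (a := (n:ℝ) * Δ) (b := ((n:ℝ) + γ) * Δ))
  have hBm : ∀ n, MeasurableSet (B n) := fun n =>
    continuous_l1.measurable (measurableSet_Ico (a := ((n:ℝ) + γ) * Δ) (b := ((n:ℝ) + 1) * Δ))
  have hcA : ∀ n : ℕ, (0:ℝ) ≤ (n:ℝ) * Δ := fun n => by positivity
  have hcAB : ∀ n : ℕ, (n:ℝ) * Δ ≤ ((n:ℝ) + γ) * Δ := fun n => by nlinarith
  have hcB : ∀ n : ℕ, (0:ℝ) ≤ ((n:ℝ) + γ) * Δ := fun n => (hcA n).trans (hcAB n)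
  have hcBC : ∀ n : ℕ, ((n:ℝ) + γ) * Δ ≤ ((n:ℝ) + 1) * Δ := fun n => by nlinarith
  have hvA : ∀ n, volume (A n) =
      ENNReal.ofReal (2 * (((n:ℝ) + γ) * Δ) ^ 2 - 2 * ((n:ℝ) * Δ) ^ 2) :=
    fun n => vol_annulus (hcA n) (hcAB n)
  have hvB : ∀ n, volume (B n) =
      ENNReal.ofReal (2 * (((n:ℝ) + 1) * Δ) ^ 2 - 2 * (((n:ℝ) + γ) * Δ) ^ 2) :=
    fun n => vol_annulus (hcB n) (hcBC n)
  set F : ℕ → ℝ × ℝ → ℝ := fun n x =>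
    (A n).indicator (fun _ => a * b ^ n) x + (B n).indicator (fun _ => a * b ^ (n + 1)) x
    with hFdef
  -- integrability
  have hintA : ∀ n, Integrable ((A n).indicator (fun _ => a * b ^ n)) :=
    fun n => (integrable_indicator_iff (hAm n)).mpr ((integrableOn_const_iff).mpr
      (Or.inr (by rw [hvA n]; exact ENNReal.ofReal_lt_top)))
  have hintB : ∀ n, Integrable ((B n).indicator (fun _ => a * b ^ (n + 1))) :=
    fun n => (integrable_indicator_iff (hBm n)).mpr ((integrableOn_const_iff).mpr
      (Or.inr (by rw [hvB n]; exact ENNReal.ofReal_lt_top)))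
  have hint : ∀ n, Integrable (F n) := fun n => (hintA n).add (hintB n)
  -- value of each integral
  have hI : ∀ n, ∫ x, F n x =
      2 * Δ ^ 2 * a * ((2 * γ + 2 * b * (1 - γ)) * ((n:ℝ) * b ^ n)
        + (γ ^ 2 + b * (1 - γ ^ 2)) * b ^ n) := by
    intro n
    have h1 : (0:ℝ) ≤ 2 * (((n:ℝ) + γ) * Δ) ^ 2 - 2 * ((n:ℝ) * Δ) ^ 2 := by
      nlinarith [hcA n, hcAB n]
    have h2 : (0:ℝ) ≤ 2 * (((n:ℝ) + 1) * Δ) ^ 2 - 2 * (((n:ℝ) + γ) * Δ) ^ 2 := by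
      nlinarith [hcB n, hcBC n]
    rw [hFdef]
    rw [integral_add (hintA n) (hintB n), integral_indicator_const _ (hAm n),
      integral_indicator_const _ (hBm n), measureReal_def, measureReal_def, hvA n, hvB n,
      ENNReal.toReal_ofReal h1, ENNReal.toReal_ofReal h2]
    simp only [smul_eq_mul]
    ring
  -- pointwise decomposition
  have hpt : ∀ x, stair ε Δ γ x = ∑' n, F n x := by
    intro x
    have h0 : 0 ≤ l1 x := l1_nonneg x
    have hfl : 0 ≤ ⌊l1 x / Δ⌋ := Int.floor_nonneg.mpr (by positivity)
    set k : ℕ := (⌊l1 x / Δ⌋).toNat with hkdef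
    have hk : ((k : ℕ) : ℝ) = ((⌊l1 x / Δ⌋ : ℤ) : ℝ) := by
      rw [hkdef]; exact_mod_cast Int.toNat_of_nonneg hfl
    have hk1 : (k:ℝ) * Δ ≤ l1 x := by
      rw [hk]
      have hd := Int.floor_le (l1 x / Δ)
      have := mul_le_mul_of_nonneg_right hd hΔ.le
      rwa [div_mul_cancel₀ _ hΔ.ne'] at this
    have hk2 : l1 x < ((k:ℝ) + 1) * Δ := by
      rw [hk]
      have hd := Int.lt_floor_add_one (l1 x / Δ)
      have := mul_lt_mul_of_pos_right hd hΔ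
      rwa [div_mul_cancel₀ _ hΔ.ne'] at this
    have huniq : ∀ n : ℕ, (n:ℝ) * Δ ≤ l1 x → l1 x < ((n:ℝ) + 1) * Δ → n = k := by
      intro n h1 h2
      have e1 : (n:ℝ) < (k:ℝ) + 1 := by
        have := lt_of_le_of_lt h1 hk2
        exact lt_of_mul_lt_mul_right this hΔ.le
      have e2 : (k:ℝ) < (n:ℝ) + 1 := by
        have := lt_of_le_of_lt hk1 h2
        exact lt_of_mul_lt_mul_right this hΔ.le
      have e1' : n < k + 1 := by exact_mod_cast e1
      have e2' : k < n + 1 := by exact_mod_cast e2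
      omega
    rw [tsum_eq_single k ?_]
    · rw [hFdef]
      simp only [stair, ← hk, ← hadef, ← hbdef]
      by_cases hc : l1 x < ((k:ℝ) + γ) * Δ
      · rw [if_pos hc]
        have hxA : x ∈ A k := ⟨hk1, hc⟩
        have hxB : x ∉ B k := fun h => absurd hc (not_lt.mpr h.1)
        rw [Set.indicator_of_mem hxA, Set.indicator_of_notMem hxB, add_zero]
        congr 1
        rw [show -(k:ℝ) * ε = (k:ℕ) * (-ε) by ring, Real.exp_nat_mul]
      · rw [if_neg hc]
        have hxB : x ∈ B k := ⟨not_lt.mp hc, hk2⟩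
        have hxA : x ∉ A k := fun h => hc h.2
        rw [Set.indicator_of_mem hxB, Set.indicator_of_notMem hxA, zero_add]
        congr 1
        rw [show -((k:ℝ) + 1) * ε = ((k + 1 : ℕ) : ℝ) * (-ε) by push_cast; ring,
          Real.exp_nat_mul]
    · intro n hn
      have hxA : x ∉ A n := fun h =>
        hn (huniq n h.1 (lt_of_lt_of_le h.2 (hcBC n)))
      have hxB : x ∉ B n := fun h =>
        hn (huniq n ((hcAB n).trans h.1) h.2)
      rw [hFdef]
      simp only [Set.indicator_of_notMem hxA, Set.indicator_of_notMem hxB, add_zero]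
  -- summability
  have hbn : ‖b‖ < 1 := by rwa [Real.norm_eq_abs, abs_of_pos hb0]
  have hs1 : Summable (fun n : ℕ => (n:ℝ) * b ^ n) := by
    have := summable_pow_mul_geometric_of_norm_lt_one 1 hbn (R := ℝ)
    simpa using this
  have hs2 : Summable (fun n : ℕ => b ^ n) := summable_geometric_of_lt_one hb0.le hb1
  have hsg : Summable (fun n : ℕ => 2 * Δ ^ 2 * a * ((2 * γ + 2 * b * (1 - γ)) * ((n:ℝ) * b ^ n)
      + (γ ^ 2 + b * (1 - γ ^ 2)) * b ^ n)) :=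
    ((hs1.mul_left _).add (hs2.mul_left _)).mul_left _
  have hFnn : ∀ n x, 0 ≤ F n x := by
    intro n x
    exact add_nonneg (Set.indicator_nonneg (fun _ _ => by positivity) x)
      (Set.indicator_nonneg (fun _ _ => by positivity) x)
  have hnorm : ∀ n : ℕ, ∫ x, ‖F n x‖ = ∫ x, F n x := by
    intro n; congr 1; funext x; exact Real.norm_of_nonneg (hFnn n x)
  have hsum : Summable (fun n : ℕ => ∫ x, ‖F n x‖) := by
    have heq : (fun n : ℕ => ∫ x, ‖F n x‖) = fun n : ℕ =>
        2 * Δ ^ 2 * a * ((2 * γ + 2 * b * (1 - γ)) * ((n:ℝ) * b ^ n)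
          + (γ ^ 2 + b * (1 - γ ^ 2)) * b ^ n) := by
      funext n; rw [hnorm n, hI n]
    rw [heq]; exact hsg
  -- final computation
  calc ∫ x : ℝ × ℝ, stair ε Δ γ x = ∫ x : ℝ × ℝ, ∑' n, F n x := by simp only [hpt]
    _ = ∑' n, ∫ x, F n x := (integral_tsum_of_summable_integral_norm hint hsum).symm
    _ = ∑' n : ℕ, 2 * Δ ^ 2 * a * ((2 * γ + 2 * b * (1 - γ)) * ((n:ℝ) * b ^ n)
          + (γ ^ 2 + b * (1 - γ ^ 2)) * b ^ n) := tsum_congr hI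
    _ = 1 := by
        rw [tsum_mul_left, Summable.tsum_add (hs1.mul_left _) (hs2.mul_left _), tsum_mul_left,
          tsum_mul_left, tsum_coe_mul_geometric_of_norm_lt_one hbn,
          tsum_geometric_of_lt_one hb0.le hb1, haval]
        have hΔ' : Δ ≠ 0 := hΔ.ne'
        have h1b' : (1 : ℝ) - b ≠ 0 := h1b.ne'
        have hD' : γ ^ 2 + 2 * b / (1 - b) * γ + (b + b ^ 2) / (1 - b) ^ 2 ≠ 0 := hD.ne'
        field_simp
        ring
end
end

section
/- For all ε > 0, Δ > 0 and γ ∈ [0,1], the two-dimensional staircase density satisfies the pointwise differential-privacy inequality: f_γ(x) ≤ e^ε · f_γ(x + t) for every x ∈ ℝ² and every t ∈ ℝ² with ‖t‖₁ ≤ Δ. -/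
open MeasureTheory Real Filter
open scoped ENNReal Topology

noncomputable section

/-- Level function of the staircase. -/
def Lfun (Δ γ u : ℝ) : ℤ :=
  if u < ((⌊u / Δ⌋ : ℝ) + γ) * Δ then ⌊u / Δ⌋ else ⌊u / Δ⌋ + 1

lemma stair_eq (ε Δ γ : ℝ) (x : ℝ × ℝ) :
    stair ε Δ γ x = anorm ε Δ γ * Real.exp (-(Lfun Δ γ (l1 x) : ℝ) * ε) := by
  unfold stair Lfun
  split_ifs with h
  · simp
  · push_cast
    ring_nf

lemma l1_add_le (x t : ℝ × ℝ) : l1 (x + t) ≤ l1 x + l1 t := by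
  simp only [l1, Prod.fst_add, Prod.snd_add]
  have h1 := abs_add_le x.1 t.1
  have h2 := abs_add_le x.2 t.2
  linarith

lemma Lfun_mono (Δ γ : ℝ) (hΔ : 0 < Δ) {u v : ℝ} (h : u ≤ v) :
    Lfun Δ γ u ≤ Lfun Δ γ v := by
  have hf : ⌊u / Δ⌋ ≤ ⌊v / Δ⌋ := Int.floor_le_floor (by gcongr)
  unfold Lfun
  rcases lt_or_eq_of_le hf with h1 | h1
  · split_ifs <;> omega
  · split_ifs with h2 h3 h3
    · omega
    · omega
    · exfalso
      rw [h1] at h2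
      exact h2 (lt_of_le_of_lt h h3)
    · omega

lemma Lfun_shift (Δ γ : ℝ) (hΔ : 0 < Δ) (u : ℝ) :
    Lfun Δ γ (u + Δ) = Lfun Δ γ u + 1 := by
  have hfl : ⌊(u + Δ) / Δ⌋ = ⌊u / Δ⌋ + 1 := by
    rw [add_div, div_self hΔ.ne', Int.floor_add_one]
  have hiff : (u + Δ < ((⌊u / Δ⌋ : ℝ) + 1 + γ) * Δ) ↔ (u < ((⌊u / Δ⌋ : ℝ) + γ) * Δ) := by
    constructor <;> intro hh <;> nlinarith
  unfold Lfun
  rw [hfl]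
  push_cast
  split_ifs with h1 h2 h2
  · rfl
  · exact absurd (hiff.mp h1) h2
  · exact absurd (hiff.mpr h2) h1
  · rfl

lemma anorm_pos (ε Δ γ : ℝ) (hε : 0 < ε) (hΔ : 0 < Δ) (hγ : 0 ≤ γ) :
    0 < anorm ε Δ γ := by
  have hb0 : 0 < Real.exp (-ε) := Real.exp_pos _
  have hb1 : Real.exp (-ε) < 1 := Real.exp_lt_one_iff.mpr (by linarith)
  unfold anorm
  have h1b : 0 < 1 - Real.exp (-ε) := by linarith
  have : 0 < γ ^ 2 + 2 * Real.exp (-ε) / (1 - Real.exp (-ε)) * γ +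
      (Real.exp (-ε) + Real.exp (-ε) ^ 2) / (1 - Real.exp (-ε)) ^ 2 := by
    have t1 : 0 ≤ γ ^ 2 := sq_nonneg _
    have t2 : 0 ≤ 2 * Real.exp (-ε) / (1 - Real.exp (-ε)) * γ := by positivity
    have t3 : 0 < (Real.exp (-ε) + Real.exp (-ε) ^ 2) / (1 - Real.exp (-ε)) ^ 2 := by
      positivity
    linarith
  positivity

/-- The two-dimensional staircase density satisfies the pointwise
differential-privacy inequality. -/
theorem staircase_pointwise_dp (ε Δ γ : ℝ) (hε : 0 < ε) (hΔ : 0 < Δ)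
    (hγ : γ ∈ Set.Icc (0 : ℝ) 1) :
    ∀ x t : ℝ × ℝ, l1 t ≤ Δ → stair ε Δ γ x ≤ Real.exp ε * stair ε Δ γ (x + t) := by
  intro x t ht
  have hv_le : l1 (x + t) ≤ l1 x + Δ := (l1_add_le x t).trans (by linarith)
  have hL : Lfun Δ γ (l1 (x + t)) ≤ Lfun Δ γ (l1 x) + 1 := by
    have hm := Lfun_mono Δ γ hΔ hv_le
    rwa [Lfun_shift Δ γ hΔ] at hm
  rw [stair_eq, stair_eq]
  have ha : 0 < anorm ε Δ γ := anorm_pos ε Δ γ hε hΔ hγ.1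
  rw [mul_comm (Real.exp ε), mul_assoc, ← Real.exp_add]
  apply mul_le_mul_of_nonneg_left _ ha.le
  apply Real.exp_le_exp.mpr
  have hLr : (Lfun Δ γ (l1 (x + t)) : ℝ) ≤ (Lfun Δ γ (l1 x) : ℝ) + 1 := by
    exact_mod_cast hL
  nlinarith
end
end

section
/- For all ε > 0, Δ > 0 and γ ∈ [0,1], the expected ℓ¹ cost of the two-dimensional staircase distribution is ∫_{ℝ²} ‖x‖₁ f_γ(x) dx = (2Δ/3) · (γ³ + (3b/(1−b))·γ² + (3(b²+b)/(1−b)²)·γ + b(1+4b+b²)/(1−b)³) / (γ² + (2b/(1−b))·γ + (b+b²)/(1−b)²), where b = e^{−ε}. -/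
open MeasureTheory Real Filter
open scoped ENNReal Topology

noncomputable section

namespace StaircaseAux

open Set

/-- The staircase density as a function of the ℓ¹ radius. -/
def sfun (ε Δ γ : ℝ) (r : ℝ) : ℝ :=
  if r < ((⌊r / Δ⌋ : ℝ) + γ) * Δ then
    anorm ε Δ γ * Real.exp (-(⌊r / Δ⌋ : ℝ) * ε)
  else
    anorm ε Δ γ * Real.exp (-((⌊r / Δ⌋ : ℝ) + 1) * ε)

lemma stair_eq (ε Δ γ : ℝ) (x : ℝ × ℝ) : stair ε Δ γ x = sfun ε Δ γ (l1 x) := rfl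

instance : MeasurableSpace (WithLp 1 (ℝ × ℝ)) := borel _
instance : BorelSpace (WithLp 1 (ℝ × ℝ)) := ⟨rfl⟩

lemma volume_l1_ball : (volume : Measure (ℝ × ℝ)) {x | |x.1| + |x.2| < 1} = 2 := by
  have hset : {x : ℝ × ℝ | |x.1| + |x.2| < 1} =
      regionBetween (fun a => |a| - 1) (fun a => 1 - |a|) (Ioo (-1 : ℝ) 1) := by
    ext ⟨x, y⟩
    simp only [regionBetween, mem_setOf_eq, mem_Ioo]
    constructor
    · intro h
      have h1 := abs_nonneg y
      have h2 := neg_abs_le y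
      have h3 := le_abs_self y
      have hx : |x| < 1 := by linarith
      rw [abs_lt] at hx
      exact ⟨⟨hx.1, hx.2⟩, by linarith [neg_abs_le x, le_abs_self x],
        by linarith [neg_abs_le x, le_abs_self x]⟩
    · rintro ⟨⟨hx1, hx2⟩, hy1, hy2⟩
      have hy : |y| < 1 - |x| := abs_lt.mpr ⟨by linarith, hy2⟩
      linarith
  have hfint : IntegrableOn (fun a : ℝ => |a| - 1) (Ioo (-1 : ℝ) 1) :=
    ((continuous_abs.sub continuous_const).integrableOn_Icc (a := -1) (b := 1)).mono_set
      Ioo_subset_Icc_self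
  have hgint : IntegrableOn (fun a : ℝ => 1 - |a|) (Ioo (-1 : ℝ) 1) :=
    ((continuous_const.sub continuous_abs).integrableOn_Icc (a := -1) (b := 1)).mono_set
      Ioo_subset_Icc_self
  have habs : ∫ y in (-1:ℝ)..1, |y| = 1 := by
    have i1 : IntervalIntegrable (fun y : ℝ => |y|) volume (-1) 0 :=
      continuous_abs.intervalIntegrable _ _
    have i2 : IntervalIntegrable (fun y : ℝ => |y|) volume 0 1 :=
      continuous_abs.intervalIntegrable _ _
    rw [← intervalIntegral.integral_add_adjacent_intervals i1 i2]
    have e1 : ∫ y in (-1:ℝ)..0, |y| = ∫ y in (-1:ℝ)..0, -y := by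
      apply intervalIntegral.integral_congr
      intro y hy
      rw [Set.uIcc_of_le (by norm_num : (-1:ℝ) ≤ 0)] at hy
      exact abs_of_nonpos hy.2
    have e2 : ∫ y in (0:ℝ)..1, |y| = ∫ y in (0:ℝ)..1, y := by
      apply intervalIntegral.integral_congr
      intro y hy
      rw [Set.uIcc_of_le (by norm_num : (0:ℝ) ≤ 1)] at hy
      exact abs_of_nonneg hy.1
    rw [e1, e2, intervalIntegral.integral_neg, integral_id, integral_id]
    norm_num
  rw [hset, Measure.volume_eq_prod,
    volume_regionBetween_eq_integral hfint hgint measurableSet_Ioo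
      (fun x hx => show |x| - 1 ≤ 1 - |x| by have h := abs_lt.mpr ⟨hx.1, hx.2⟩; linarith)]
  have hfun : ((fun a => 1 - |a|) - fun a : ℝ => |a| - 1) = (fun a : ℝ => 2 - 2 * |a|) := by
    ext a
    simp only [Pi.sub_apply]
    ring
  rw [hfun]
  have : ∫ y in Ioo (-1:ℝ) 1, (2 - 2 * |y|)
      = ∫ y in (-1:ℝ)..1, (2 - 2 * |y|) := by
    rw [← integral_Ioc_eq_integral_Ioo, ← intervalIntegral.integral_of_le (by norm_num : (-1:ℝ) ≤ 1)]
  rw [this]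
  have : ∫ y in (-1:ℝ)..1, (fun y : ℝ => 2 - 2 * |y|) y = 2 := by
    rw [intervalIntegral.integral_sub (f := fun _ => (2:ℝ)) (g := fun y => 2 * |y|) (intervalIntegrable_const)
      ((continuous_const.mul continuous_abs).intervalIntegrable _ _),
      intervalIntegral.integral_const_mul, habs]
    simp
    norm_num
  rw [this]
  norm_num

/-- Transfer of an integral of a function of the ℓ¹ norm to a 1-D integral. -/
lemma integral_comp_l1 (f : ℝ → ℝ) :
    ∫ x : ℝ × ℝ, f (l1 x) = 4 * ∫ y in Ioi (0:ℝ), y * f y := by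
  set e : WithLp 1 (ℝ × ℝ) ≃L[ℝ] ℝ × ℝ := WithLp.prodContinuousLinearEquiv 1 ℝ ℝ ℝ with he
  haveI : Nontrivial (WithLp 1 (ℝ × ℝ)) := e.toEquiv.nontrivial
  haveI : FiniteDimensional ℝ (WithLp 1 (ℝ × ℝ)) :=
    (WithLp.linearEquiv 1 ℝ (ℝ × ℝ)).symm.finiteDimensional
  set em : (ℝ × ℝ) ≃ᵐ WithLp 1 (ℝ × ℝ) := e.symm.toHomeomorph.toMeasurableEquiv with hem
  set μ : Measure (WithLp 1 (ℝ × ℝ)) := volume.map em with hμ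
  haveI : μ.IsAddHaarMeasure := e.symm.isAddHaarMeasure_map volume
  have hnorm : ∀ x : ℝ × ℝ, ‖em x‖ = l1 x := by
    intro x
    have : ‖em x‖ = (‖(em x).fst‖ ^ (1:ℝ≥0∞).toReal + ‖(em x).snd‖ ^ (1:ℝ≥0∞).toReal)
        ^ (1 / (1:ℝ≥0∞).toReal) := WithLp.prod_norm_eq_add (by norm_num) _
    have hx : (em x).fst = x.1 ∧ (em x).snd = x.2 := ⟨rfl, rfl⟩
    simpa [l1, Real.norm_eq_abs, hx.1, hx.2] using this
  have hdim : Module.finrank ℝ (WithLp 1 (ℝ × ℝ)) = 2 := by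
    rw [(WithLp.linearEquiv 1 ℝ (ℝ × ℝ)).finrank_eq]
    simp [Module.finrank_prod]
  have hball : μ (Metric.ball 0 1) = 2 := by
    rw [hμ, MeasurableEquiv.map_apply]
    have : em ⁻¹' Metric.ball 0 1 = {x : ℝ × ℝ | |x.1| + |x.2| < 1} := by
      ext x
      simp only [mem_preimage, mem_ball_zero_iff, mem_setOf_eq, hnorm x, l1]
    rw [this, volume_l1_ball]
  have key := MeasureTheory.integral_fun_norm_addHaar μ f
  rw [hdim] at key
  rw [hμ, MeasureTheory.integral_map_equiv] at key
  have : ∀ x : ℝ × ℝ, f ‖em x‖ = f (l1 x) := fun x => by rw [hnorm]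
  simp only [this] at key
  rw [key, ← hμ, measureReal_def, hball]
  have h21 : (2 - 1 : ℕ) = 1 := rfl
  simp only [h21, smul_eq_mul, nsmul_eq_mul, ENNReal.toReal_ofNat, pow_one, Nat.cast_ofNat]
  ring

lemma summable_quad {b : ℝ} (hb' : ‖b‖ < 1) (p q r : ℝ) :
    Summable (fun k : ℕ => (p * (k : ℝ) ^ 2 + q * (k : ℝ) + r) * b ^ k) := by
  have hs2 : Summable (fun k : ℕ => (k : ℝ) ^ 2 * b ^ k) := by
    simpa using summable_pow_mul_geometric_of_norm_lt_one 2 hb'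
  have hs1 : Summable (fun k : ℕ => (k : ℝ) * b ^ k) := by
    simpa using summable_pow_mul_geometric_of_norm_lt_one 1 hb'
  have hs0 : Summable (fun k : ℕ => b ^ k) := by
    simpa using summable_pow_mul_geometric_of_norm_lt_one 0 hb'
  exact (((hs2.mul_left p).add (hs1.mul_left q)).add (hs0.mul_left r)).congr
    (fun k => by ring)

lemma tsum_sq_geom {b : ℝ} (hb0 : 0 ≤ b) (hb1 : b < 1) :
    ∑' k : ℕ, (k : ℝ) ^ 2 * b ^ k = b * (1 + b) / (1 - b) ^ 3 := by
  have hb' : ‖b‖ < 1 := by rwa [Real.norm_eq_abs, abs_of_nonneg hb0]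
  have hs2 : Summable (fun k : ℕ => (k : ℝ) ^ 2 * b ^ k) := by
    simpa using summable_pow_mul_geometric_of_norm_lt_one 2 hb'
  have hs1 : Summable (fun k : ℕ => (k : ℝ) * b ^ k) := by
    simpa using summable_pow_mul_geometric_of_norm_lt_one 1 hb'
  have hs0 : Summable (fun k : ℕ => b ^ k) := summable_geometric_of_lt_one hb0 hb1
  have h1 : ∑' k : ℕ, (k : ℝ) * b ^ k = b / (1 - b) ^ 2 :=
    tsum_coe_mul_geometric_of_norm_lt_one hb'
  have h0 : ∑' k : ℕ, b ^ k = (1 - b)⁻¹ := tsum_geometric_of_lt_one hb0 hb1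
  have hne : (1 : ℝ) - b ≠ 0 := by linarith
  have key : ∑' k : ℕ, (k : ℝ) ^ 2 * b ^ k
      = b * ∑' k : ℕ, (k : ℝ) ^ 2 * b ^ k + (2 * b * (b / (1 - b) ^ 2) + b * (1 - b)⁻¹) := by
    calc ∑' k : ℕ, (k : ℝ) ^ 2 * b ^ k
        = ((0 : ℕ) : ℝ) ^ 2 * b ^ 0 + ∑' k : ℕ, ((k + 1 : ℕ) : ℝ) ^ 2 * b ^ (k + 1) :=
          Summable.tsum_eq_zero_add hs2
      _ = ∑' k : ℕ, (b * ((k : ℝ) ^ 2 * b ^ k) + (2 * b * ((k : ℝ) * b ^ k) + b * b ^ k)) := by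
          rw [show (((0 : ℕ) : ℝ) ^ 2 * b ^ 0) = 0 by norm_num, zero_add]
          exact tsum_congr fun k => by push_cast; ring
      _ = b * (∑' k : ℕ, (k : ℝ) ^ 2 * b ^ k)
          + (2 * b * (∑' k : ℕ, (k : ℝ) * b ^ k) + b * ∑' k : ℕ, b ^ k) := by
          rw [Summable.tsum_add (hs2.mul_left b) ((hs1.mul_left (2 * b)).add (hs0.mul_left b)),
            Summable.tsum_add (hs1.mul_left (2 * b)) (hs0.mul_left b),
            tsum_mul_left, tsum_mul_left, tsum_mul_left]
      _ = b * (∑' k : ℕ, (k : ℝ) ^ 2 * b ^ k) + (2 * b * (b / (1 - b) ^ 2) + b * (1 - b)⁻¹) := by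
          rw [h1, h0]
  have hgoal : (∑' k : ℕ, (k : ℝ) ^ 2 * b ^ k) * (1 - b)
      = 2 * b * (b / (1 - b) ^ 2) + b * (1 - b)⁻¹ := by linarith
  rw [eq_div_iff (pow_ne_zero 3 hne)]
  calc (∑' k : ℕ, (k : ℝ) ^ 2 * b ^ k) * (1 - b) ^ 3
      = ((∑' k : ℕ, (k : ℝ) ^ 2 * b ^ k) * (1 - b)) * (1 - b) ^ 2 := by ring
    _ = (2 * b * (b / (1 - b) ^ 2) + b * (1 - b)⁻¹) * (1 - b) ^ 2 := by rw [hgoal]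
    _ = b * (1 + b) := by field_simp; ring

lemma tsum_quad {b : ℝ} (hb0 : 0 ≤ b) (hb1 : b < 1) (p q r : ℝ) :
    ∑' k : ℕ, (p * (k : ℝ) ^ 2 + q * (k : ℝ) + r) * b ^ k
      = p * (b * (1 + b) / (1 - b) ^ 3) + q * (b / (1 - b) ^ 2) + r * (1 - b)⁻¹ := by
  have hb' : ‖b‖ < 1 := by rwa [Real.norm_eq_abs, abs_of_nonneg hb0]
  have hs2 : Summable (fun k : ℕ => (k : ℝ) ^ 2 * b ^ k) := by
    simpa using summable_pow_mul_geometric_of_norm_lt_one 2 hb'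
  have hs1 : Summable (fun k : ℕ => (k : ℝ) * b ^ k) := by
    simpa using summable_pow_mul_geometric_of_norm_lt_one 1 hb'
  have hs0 : Summable (fun k : ℕ => b ^ k) := summable_geometric_of_lt_one hb0 hb1
  calc ∑' k : ℕ, (p * (k : ℝ) ^ 2 + q * (k : ℝ) + r) * b ^ k
      = ∑' k : ℕ, (p * ((k : ℝ) ^ 2 * b ^ k) + (q * ((k : ℝ) * b ^ k) + r * b ^ k)) :=
        tsum_congr fun k => by ring
    _ = p * (∑' k : ℕ, (k : ℝ) ^ 2 * b ^ k)
        + (q * (∑' k : ℕ, (k : ℝ) * b ^ k) + r * ∑' k : ℕ, b ^ k) := by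
        rw [Summable.tsum_add (hs2.mul_left p) ((hs1.mul_left q).add (hs0.mul_left r)),
          Summable.tsum_add (hs1.mul_left q) (hs0.mul_left r),
          tsum_mul_left, tsum_mul_left, tsum_mul_left]
    _ = p * (b * (1 + b) / (1 - b) ^ 3) + (q * (b / (1 - b) ^ 2) + r * (1 - b)⁻¹) := by
        rw [tsum_sq_geom hb0 hb1, tsum_coe_mul_geometric_of_norm_lt_one hb',
          tsum_geometric_of_lt_one hb0 hb1]
    _ = _ := by ring

variable {ε Δ γ : ℝ}

lemma anorm_pos (hε : 0 < ε) (hΔ : 0 < Δ) (hγ0 : 0 ≤ γ) : 0 < anorm ε Δ γ := by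
  have hb0 : 0 < Real.exp (-ε) := Real.exp_pos _
  have hb1 : Real.exp (-ε) < 1 := by
    rw [Real.exp_lt_one_iff]
    linarith
  have h1b : 0 < 1 - Real.exp (-ε) := by linarith
  have t2 : 0 ≤ 2 * Real.exp (-ε) / (1 - Real.exp (-ε)) * γ := by positivity
  have t3 : 0 < (Real.exp (-ε) + Real.exp (-ε) ^ 2) / (1 - Real.exp (-ε)) ^ 2 := by positivity
  have t1 : 0 ≤ γ ^ 2 := sq_nonneg γ
  unfold anorm
  apply one_div_pos.mpr
  have : 0 < γ ^ 2 + 2 * Real.exp (-ε) / (1 - Real.exp (-ε)) * γ +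
      (Real.exp (-ε) + Real.exp (-ε) ^ 2) / (1 - Real.exp (-ε)) ^ 2 := by linarith
  positivity

lemma sfun_nonneg (hε : 0 < ε) (hΔ : 0 < Δ) (hγ0 : 0 ≤ γ) (r : ℝ) : 0 ≤ sfun ε Δ γ r := by
  have ha := (anorm_pos hε hΔ hγ0).le
  unfold sfun
  split_ifs <;> exact mul_nonneg ha (Real.exp_pos _).le

lemma measurable_sfun (ε Δ γ : ℝ) : Measurable (sfun ε Δ γ) := by
  have h1 : Measurable fun r : ℝ => (⌊r / Δ⌋ : ℤ) := (measurable_id.div_const Δ).floor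
  have h2 : Measurable fun r : ℝ => ((⌊r / Δ⌋ : ℤ) : ℝ) :=
    Measurable.comp (Measurable.of_discrete) h1
  have hset : MeasurableSet {r : ℝ | r < ((⌊r / Δ⌋ : ℝ) + γ) * Δ} :=
    measurableSet_lt measurable_id ((h2.add_const γ).mul_const Δ)
  exact Measurable.ite hset
    (measurable_const.mul (Real.measurable_exp.comp (h2.neg.mul_const ε)))
    (measurable_const.mul (Real.measurable_exp.comp ((h2.add_const 1).neg.mul_const ε)))

lemma floor_eq_on_Ico (hΔ : 0 < Δ) (k : ℕ) {y : ℝ}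
    (hy : y ∈ Ico ((k : ℝ) * Δ) (((k : ℝ) + 1) * Δ)) : (⌊y / Δ⌋ : ℤ) = (k : ℤ) := by
  rw [Int.floor_eq_iff]
  constructor
  · push_cast
    exact (le_div_iff₀ hΔ).mpr (by linarith [hy.1])
  · push_cast
    exact (div_lt_iff₀ hΔ).mpr (by linarith [hy.2])

lemma lintegral_piece (hε : 0 < ε) (hΔ : 0 < Δ) (hγ0 : 0 ≤ γ) (hγ1 : γ ≤ 1) (k : ℕ) :
    ∫⁻ y in Ico ((k : ℝ) * Δ) (((k : ℝ) + 1) * Δ),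
        ENNReal.ofReal (y * (y * sfun ε Δ γ y))
      = ENNReal.ofReal (anorm ε Δ γ * Real.exp (-ε) ^ k
            * ((((k : ℝ) + γ) * Δ) ^ 3 - ((k : ℝ) * Δ) ^ 3) / 3)
        + ENNReal.ofReal (anorm ε Δ γ * Real.exp (-ε) ^ (k + 1)
            * ((((k : ℝ) + 1) * Δ) ^ 3 - (((k : ℝ) + γ) * Δ) ^ 3) / 3) := by
  have ha := (anorm_pos hε hΔ hγ0).le
  have h1 : (k : ℝ) * Δ ≤ ((k : ℝ) + γ) * Δ := by nlinarith
  have h2 : ((k : ℝ) + γ) * Δ ≤ ((k : ℝ) + 1) * Δ := by nlinarith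
  have hsfun1 : ∀ y ∈ Ico ((k : ℝ) * Δ) (((k : ℝ) + γ) * Δ),
      y * (y * sfun ε Δ γ y) = (anorm ε Δ γ * Real.exp (-ε) ^ k) * y ^ 2 := by
    intro y hy
    have hy' : y ∈ Ico ((k : ℝ) * Δ) (((k : ℝ) + 1) * Δ) := ⟨hy.1, lt_of_lt_of_le hy.2 h2⟩
    unfold sfun
    rw [floor_eq_on_Ico hΔ k hy']
    rw [if_pos (by push_cast; exact hy.2)]
    rw [show -(((k : ℤ) : ℝ)) * ε = (k : ℕ) * (-ε) by push_cast; ring, Real.exp_nat_mul]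
    ring
  have hsfun2 : ∀ y ∈ Ico (((k : ℝ) + γ) * Δ) (((k : ℝ) + 1) * Δ),
      y * (y * sfun ε Δ γ y) = (anorm ε Δ γ * Real.exp (-ε) ^ (k + 1)) * y ^ 2 := by
    intro y hy
    have hy' : y ∈ Ico ((k : ℝ) * Δ) (((k : ℝ) + 1) * Δ) := ⟨le_trans h1 hy.1, hy.2⟩
    unfold sfun
    rw [floor_eq_on_Ico hΔ k hy']
    rw [if_neg (by push_cast; exact not_lt.mpr hy.1)]
    rw [show -((((k : ℤ) : ℝ)) + 1) * ε = ((k + 1 : ℕ) : ℝ) * (-ε) by push_cast; ring,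
      Real.exp_nat_mul]
    ring
  have hpc : ∀ (c α β : ℝ), 0 ≤ c → α ≤ β →
      ∫⁻ y in Ico α β, ENNReal.ofReal (c * y ^ 2)
        = ENNReal.ofReal (c * (β ^ 3 - α ^ 3) / 3) := by
    intro c α β hc hαβ
    have hint : IntegrableOn (fun y : ℝ => c * y ^ 2) (Ico α β) volume :=
      ((continuous_const.mul (continuous_pow 2)).integrableOn_Icc).mono_set
        Ico_subset_Icc_self
    have hnn : 0 ≤ᵐ[volume.restrict (Ico α β)] fun y : ℝ => c * y ^ 2 :=
      ae_of_all _ fun y => by positivity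
    rw [← ofReal_integral_eq_lintegral_ofReal hint hnn]
    congr 1
    rw [show volume.restrict (Ico α β) = volume.restrict (Ioc α β) from
      Measure.restrict_congr_set Ico_ae_eq_Ioc,
      ← intervalIntegral.integral_of_le hαβ, intervalIntegral.integral_const_mul,
      integral_pow]
    push_cast
    ring
  rw [← Ico_union_Ico_eq_Ico h1 h2,
    lintegral_union measurableSet_Ico Ico_disjoint_Ico_same]
  congr 1
  · rw [setLIntegral_congr_fun measurableSet_Ico
      (fun y (hy : y ∈ Ico ((k : ℝ) * Δ) (((k : ℝ) + γ) * Δ)) =>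
        show ENNReal.ofReal (y * (y * sfun ε Δ γ y))
            = ENNReal.ofReal ((anorm ε Δ γ * Real.exp (-ε) ^ k) * y ^ 2) from
          by rw [hsfun1 y hy])]
    exact hpc _ _ _ (mul_nonneg ha (pow_nonneg (Real.exp_pos _).le _)) h1
  · rw [setLIntegral_congr_fun measurableSet_Ico
      (fun y (hy : y ∈ Ico (((k : ℝ) + γ) * Δ) (((k : ℝ) + 1) * Δ)) =>
        show ENNReal.ofReal (y * (y * sfun ε Δ γ y))
            = ENNReal.ofReal ((anorm ε Δ γ * Real.exp (-ε) ^ (k + 1)) * y ^ 2) from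
          by rw [hsfun2 y hy])]
    exact hpc _ _ _ (mul_nonneg ha (pow_nonneg (Real.exp_pos _).le _)) h2

lemma integral_radial (hε : 0 < ε) (hΔ : 0 < Δ) (hγ0 : 0 ≤ γ) (hγ1 : γ ≤ 1) :
    ∫ y in Ioi (0 : ℝ), y * (y * sfun ε Δ γ y)
      = (∑' k : ℕ, anorm ε Δ γ * Real.exp (-ε) ^ k
            * ((((k : ℝ) + γ) * Δ) ^ 3 - ((k : ℝ) * Δ) ^ 3) / 3)
        + ∑' k : ℕ, anorm ε Δ γ * Real.exp (-ε) ^ (k + 1)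
            * ((((k : ℝ) + 1) * Δ) ^ 3 - (((k : ℝ) + γ) * Δ) ^ 3) / 3 := by
  have ha := (anorm_pos hε hΔ hγ0).le
  have hb' : ‖Real.exp (-ε)‖ < 1 := by
    rw [Real.norm_eq_abs, abs_of_nonneg (Real.exp_pos _).le, Real.exp_lt_one_iff]
    linarith
  have hmeas : Measurable fun y : ℝ => y * (y * sfun ε Δ γ y) :=
    measurable_id.mul (measurable_id.mul (measurable_sfun ε Δ γ))
  have hnn : 0 ≤ᵐ[volume.restrict (Ioi (0 : ℝ))] fun y : ℝ => y * (y * sfun ε Δ γ y) :=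
    (ae_restrict_mem measurableSet_Ioi).mono fun y hy =>
      mul_nonneg (le_of_lt hy) (mul_nonneg (le_of_lt hy) (sfun_nonneg hε hΔ hγ0 y))
  rw [MeasureTheory.integral_eq_lintegral_of_nonneg_ae hnn
    hmeas.aestronglyMeasurable.restrict]
  have hIoiIci : volume.restrict (Ioi (0 : ℝ)) = volume.restrict (Ici (0 : ℝ)) :=
    Measure.restrict_congr_set Ioi_ae_eq_Ici
  have hcover : Ici (0 : ℝ) = ⋃ k : ℕ, Ico ((k : ℝ) * Δ) (((k : ℝ) + 1) * Δ) := by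
    ext y
    simp only [mem_Ici, mem_iUnion, mem_Ico]
    constructor
    · intro hy
      refine ⟨⌊y / Δ⌋₊, ?_, ?_⟩
      · exact (le_div_iff₀ hΔ).mp (Nat.floor_le (div_nonneg hy hΔ.le))
      · exact (div_lt_iff₀ hΔ).mp (Nat.lt_floor_add_one (y / Δ))
    · rintro ⟨k, hk1, hk2⟩
      have : (0 : ℝ) ≤ (k : ℝ) * Δ := by positivity
      linarith
  have hdisj : Pairwise (Function.onFun Disjoint
      fun k : ℕ => Ico ((k : ℝ) * Δ) (((k : ℝ) + 1) * Δ)) := by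
    intro i j hij
    rcases lt_or_gt_of_ne hij with h | h
    · apply Set.disjoint_left.mpr
      rintro y ⟨hy1, hy2⟩ ⟨hy3, hy4⟩
      have : ((i : ℝ) + 1) * Δ ≤ (j : ℝ) * Δ := by
        have : (i : ℝ) + 1 ≤ (j : ℝ) := by exact_mod_cast h
        nlinarith
      linarith
    · apply Set.disjoint_left.mpr
      rintro y ⟨hy1, hy2⟩ ⟨hy3, hy4⟩
      have : ((j : ℝ) + 1) * Δ ≤ (i : ℝ) * Δ := by
        have : (j : ℝ) + 1 ≤ (i : ℝ) := by exact_mod_cast h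
        nlinarith
      linarith
  rw [hIoiIci, hcover, lintegral_iUnion (fun k => measurableSet_Ico) hdisj]
  have hpieces := fun k => lintegral_piece hε hΔ hγ0 hγ1 k
  rw [tsum_congr hpieces, ENNReal.tsum_add]
  have hAnn : ∀ k : ℕ, 0 ≤ anorm ε Δ γ * Real.exp (-ε) ^ k
      * ((((k : ℝ) + γ) * Δ) ^ 3 - ((k : ℝ) * Δ) ^ 3) / 3 := by
    intro k
    have h1 : (k : ℝ) * Δ ≤ ((k : ℝ) + γ) * Δ := by nlinarith
    have h0 : (0 : ℝ) ≤ (k : ℝ) * Δ := by positivity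
    have := pow_le_pow_left₀ h0 h1 3
    have hb := (Real.exp_pos (-ε)).le
    have : (0 : ℝ) ≤ (((k : ℝ) + γ) * Δ) ^ 3 - ((k : ℝ) * Δ) ^ 3 := by linarith
    positivity
  have hBnn : ∀ k : ℕ, 0 ≤ anorm ε Δ γ * Real.exp (-ε) ^ (k + 1)
      * ((((k : ℝ) + 1) * Δ) ^ 3 - (((k : ℝ) + γ) * Δ) ^ 3) / 3 := by
    intro k
    have h1 : ((k : ℝ) + γ) * Δ ≤ ((k : ℝ) + 1) * Δ := by nlinarith
    have h0 : (0 : ℝ) ≤ ((k : ℝ) + γ) * Δ := by positivity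
    have := pow_le_pow_left₀ h0 h1 3
    have hb := (Real.exp_pos (-ε)).le
    have : (0 : ℝ) ≤ (((k : ℝ) + 1) * Δ) ^ 3 - (((k : ℝ) + γ) * Δ) ^ 3 := by linarith
    positivity
  have hAsum : Summable (fun k : ℕ => anorm ε Δ γ * Real.exp (-ε) ^ k
      * ((((k : ℝ) + γ) * Δ) ^ 3 - ((k : ℝ) * Δ) ^ 3) / 3) :=
    (summable_quad hb' (anorm ε Δ γ * Δ ^ 3 * γ) (anorm ε Δ γ * Δ ^ 3 * γ ^ 2)
      (anorm ε Δ γ * Δ ^ 3 * γ ^ 3 / 3)).congr (fun k => by ring)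
  have hBsum : Summable (fun k : ℕ => anorm ε Δ γ * Real.exp (-ε) ^ (k + 1)
      * ((((k : ℝ) + 1) * Δ) ^ 3 - (((k : ℝ) + γ) * Δ) ^ 3) / 3) :=
    (summable_quad hb' (anorm ε Δ γ * Real.exp (-ε) * Δ ^ 3 * (1 - γ))
      (anorm ε Δ γ * Real.exp (-ε) * Δ ^ 3 * (1 - γ ^ 2))
      (anorm ε Δ γ * Real.exp (-ε) * Δ ^ 3 * (1 - γ ^ 3) / 3)).congr (fun k => by ring)
  rw [← ENNReal.ofReal_tsum_of_nonneg hAnn hAsum, ← ENNReal.ofReal_tsum_of_nonneg hBnn hBsum,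
    ENNReal.toReal_add ENNReal.ofReal_ne_top ENNReal.ofReal_ne_top,
    ENNReal.toReal_ofReal (tsum_nonneg hAnn), ENNReal.toReal_ofReal (tsum_nonneg hBnn)]

end StaircaseAux

set_option maxHeartbeats 2000000 in
/-- The expected ℓ¹ cost of the two-dimensional staircase distribution in closed form. -/
theorem staircase_cost_formula (ε Δ γ : ℝ) (hε : 0 < ε) (hΔ : 0 < Δ)
    (hγ : γ ∈ Set.Icc (0 : ℝ) 1) :
    ∫ x : ℝ × ℝ, l1 x * stair ε Δ γ x =
      (2 * Δ / 3) *
        (γ ^ 3 + 3 * Real.exp (-ε) / (1 - Real.exp (-ε)) * γ ^ 2 +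
          3 * (Real.exp (-ε) ^ 2 + Real.exp (-ε)) / (1 - Real.exp (-ε)) ^ 2 * γ +
          Real.exp (-ε) * (1 + 4 * Real.exp (-ε) + Real.exp (-ε) ^ 2) /
            (1 - Real.exp (-ε)) ^ 3) /
        (γ ^ 2 + 2 * Real.exp (-ε) / (1 - Real.exp (-ε)) * γ +
          (Real.exp (-ε) + Real.exp (-ε) ^ 2) / (1 - Real.exp (-ε)) ^ 2) := by
  obtain ⟨hγ0, hγ1⟩ := hγ
  have hb0 : (0:ℝ) < Real.exp (-ε) := Real.exp_pos _
  have hb1 : Real.exp (-ε) < 1 := by rw [Real.exp_lt_one_iff]; linarith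
  have key : (∫ x : ℝ × ℝ, l1 x * StaircaseAux.sfun ε Δ γ (l1 x))
      = 4 * ∫ y in Set.Ioi (0:ℝ), y * (y * StaircaseAux.sfun ε Δ γ y) :=
    StaircaseAux.integral_comp_l1 (fun r => r * StaircaseAux.sfun ε Δ γ r)
  simp only [StaircaseAux.stair_eq]
  rw [key, StaircaseAux.integral_radial hε hΔ hγ0 hγ1]
  set b := Real.exp (-ε) with hbdef
  set a := anorm ε Δ γ with hadef
  have eA : (∑' k : ℕ, a * b ^ k * ((((k : ℝ) + γ) * Δ) ^ 3 - ((k : ℝ) * Δ) ^ 3) / 3)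
      = (a * Δ ^ 3 * γ) * (b * (1 + b) / (1 - b) ^ 3)
        + (a * Δ ^ 3 * γ ^ 2) * (b / (1 - b) ^ 2)
        + (a * Δ ^ 3 * γ ^ 3 / 3) * (1 - b)⁻¹ := by
    rw [← StaircaseAux.tsum_quad hb0.le hb1 (a * Δ ^ 3 * γ) (a * Δ ^ 3 * γ ^ 2)
      (a * Δ ^ 3 * γ ^ 3 / 3)]
    exact tsum_congr fun k => by ring
  have eB : (∑' k : ℕ, a * b ^ (k + 1) * ((((k : ℝ) + 1) * Δ) ^ 3 - (((k : ℝ) + γ) * Δ) ^ 3) / 3)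
      = (a * b * Δ ^ 3 * (1 - γ)) * (b * (1 + b) / (1 - b) ^ 3)
        + (a * b * Δ ^ 3 * (1 - γ ^ 2)) * (b / (1 - b) ^ 2)
        + (a * b * Δ ^ 3 * (1 - γ ^ 3) / 3) * (1 - b)⁻¹ := by
    rw [← StaircaseAux.tsum_quad hb0.le hb1 (a * b * Δ ^ 3 * (1 - γ))
      (a * b * Δ ^ 3 * (1 - γ ^ 2)) (a * b * Δ ^ 3 * (1 - γ ^ 3) / 3)]
    exact tsum_congr fun k => by ring
  rw [eA, eB]
  have hne : (1:ℝ) - b ≠ 0 := by linarith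
  have h1b : (0:ℝ) < 1 - b := by linarith
  have hΔne : Δ ≠ 0 := hΔ.ne'
  have hD : 0 < γ ^ 2 + 2 * b / (1 - b) * γ + (b + b ^ 2) / (1 - b) ^ 2 := by
    have t2 : 0 ≤ 2 * b / (1 - b) * γ := by positivity
    have t3 : 0 < (b + b ^ 2) / (1 - b) ^ 2 := by positivity
    have t1 : 0 ≤ γ ^ 2 := sq_nonneg γ
    linarith
  have hDne : γ ^ 2 + 2 * b / (1 - b) * γ + (b + b ^ 2) / (1 - b) ^ 2 ≠ 0 := ne_of_gt hD
  have haval : a = 1 / (2 * Δ ^ 2 *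
      (γ ^ 2 + 2 * b / (1 - b) * γ + (b + b ^ 2) / (1 - b) ^ 2)) := rfl
  rw [haval]
  field_simp
  ring
end
end

section
/- Let ε > 0 and let Δ be a positive integer. Let p be a probability mass function on ℤ² such that p(i₁,j₁) ≤ e^ε · p(i₂,j₂) whenever |i₁−i₂| + |j₁−j₂| ≤ Δ. Define p̃ on ℤ² by p̃(0,0) = p(0,0) and p̃(i,j) = p_{|i|+|j|} for (i,j) ≠ (0,0), where for k ≥ 1, p_k = (Σ_{(i',j') ∈ ℤ² : |i'|+|j'| = k} p(i',j')) / (4k). Then p̃ is a probability mass function on ℤ² and p̃(i₁,j₁) ≤ e^ε · p̃(i₂,j₂) whenever |i₁−i₂| + |j₁−j₂| ≤ Δ. (Lemma 2: averaging over ℓ¹ spheres preserves the discrete differential-privacy constraint.) -/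
open scoped BigOperators

noncomputable section

namespace AvgDP

def f (k t : ℕ) : ℤ × ℤ :=
  if t ≤ k then ((k : ℤ) - t, t)
  else if t ≤ 2*k then ((k:ℤ) - t, 2*k - t)
  else if t ≤ 3*k then ((t:ℤ) - 3*k, 2*k - t)
  else ((t:ℤ) - 3*k, (t:ℤ) - 4*k)

lemma norm_f {k t : ℕ} (hk : 1 ≤ k) (ht : t < 4*k) :
    |(f k t).1| + |(f k t).2| = (k : ℤ) := by
  simp only [f]
  split_ifs <;> simp only [Int.abs_eq_natAbs] <;> omega

lemma f_inj {k t t' : ℕ} (ht : t < 4*k) (ht' : t' < 4*k)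
    (h : f k t = f k t') : t = t' := by
  simp only [f] at h
  split_ifs at h <;> (rw [Prod.ext_iff] at h; omega)

lemma f_surj {k : ℕ} (hk : 1 ≤ k) (v : ℤ × ℤ) (hv : |v.1| + |v.2| = (k:ℤ)) :
    ∃ t, t < 4*k ∧ f k t = v := by
  simp only [Int.abs_eq_natAbs] at hv
  rcases le_or_gt 0 v.2 with h2 | h2
  · rcases le_or_gt 0 v.1 with h1 | h1
    · exact ⟨v.2.toNat, by omega, by simp only [f]; split_ifs <;> (rw [Prod.ext_iff]; constructor <;> omega)⟩
    · exact ⟨(2*(k:ℤ) - v.2).toNat, by omega, by simp only [f]; split_ifs <;> (rw [Prod.ext_iff]; constructor <;> omega)⟩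
  · exact ⟨(3*(k:ℤ) + v.1).toNat, by omega, by simp only [f]; split_ifs <;> (rw [Prod.ext_iff]; constructor <;> omega)⟩

lemma rot_f {k t : ℕ} (hk : 1 ≤ k) (h1 : k ≤ t) (h2 : t < 4*k) :
    f k t = (-(f k (t-k)).2, (f k (t-k)).1) := by
  simp only [f]
  split_ifs <;> (rw [Prod.ext_iff]; constructor <;> simp <;> omega)

lemma key1 {a b t t' : ℤ} (ha : 1 ≤ a) (hab : a ≤ b) (ht0 : 0 ≤ t) (hta : t ≤ a)
    (ht'0 : 0 ≤ t') (ht'b : t' ≤ b) (h1 : t*b < (t'+1)*a) (h2 : t'*a < (t+1)*b) :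
    t ≤ t' ∧ t' ≤ t + (b - a) := by
  constructor
  · nlinarith [mul_le_mul_of_nonneg_left hab (by linarith : (0:ℤ) ≤ t'+1)]
  · rcases eq_or_lt_of_le hta with h | h
    · linarith
    · nlinarith [mul_nonneg (by linarith : (0:ℤ) ≤ b - a) (by linarith : (0:ℤ) ≤ a - 1 - t)]

lemma key2 {a b t t' : ℤ} (ha : 1 ≤ a) (hb : 1 ≤ b) (ht0 : 0 ≤ t) (hta : t ≤ a)
    (hbt' : b < t') (h1 : t*b < (t'+1)*a) (h2 : t'*a < (t+1)*b) :
    t = a ∧ a ≤ b ∧ t' ≤ 2*b - a := by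
  have h3 : a ≤ t := by nlinarith
  have h4 : a ≤ b := by nlinarith
  refine ⟨le_antisymm hta h3, h4, ?_⟩
  nlinarith [mul_nonneg (by linarith : (0:ℤ) ≤ a - 1) (by linarith : (0:ℤ) ≤ b - a)]

lemma tp_lt {a b t t' : ℤ} (ha : 1 ≤ a) (hb : 1 ≤ b) (hta : t ≤ a) (ht'0 : 0 ≤ t')
    (h2 : t'*a < (t+1)*b) : t' < 2*b := by
  nlinarith

lemma t_ge {a b t t' : ℤ} (ha : 1 ≤ a) (hb : 1 ≤ b) (ht0 : 0 ≤ t) (ht'0 : 0 ≤ t')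
    (hat : a < t) (h1 : t*b < (t'+1)*a) : b ≤ t' := by
  nlinarith

lemma dist_core {a b t t' : ℕ} (ha : 1 ≤ a) (hb : 1 ≤ b) (hta : t ≤ a) (ht' : t' < 4*b)
    (h1 : t*b < (t'+1)*a) (h2 : t'*a < (t+1)*b) :
    |(f a t).1 - (f b t').1| + |(f a t).2 - (f b t').2| ≤ |(a:ℤ) - b| := by
  have hA : (1:ℤ) ≤ a := by exact_mod_cast ha
  have hB : (1:ℤ) ≤ b := by exact_mod_cast hb
  have hTA : (t:ℤ) ≤ a := by exact_mod_cast hta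
  have H1 : (t:ℤ)*b < ((t':ℤ)+1)*a := by exact_mod_cast h1
  have H2 : (t':ℤ)*a < ((t:ℤ)+1)*b := by exact_mod_cast h2
  have hfa : f a t = ((a:ℤ) - t, (t:ℤ)) := by simp [f, hta]
  have ht2b : (t':ℤ) < 2*b := tp_lt hA hB hTA (by positivity) H2
  rcases le_or_gt t' b with hq | hq
  · have hfb : f b t' = ((b:ℤ) - t', (t':ℤ)) := by simp [f, hq]
    rw [hfa, hfb]
    rcases le_total a b with hab | hab
    · obtain ⟨k1, k2⟩ := key1 hA (by exact_mod_cast hab) (by positivity) hTA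
        (by positivity) (by exact_mod_cast hq) H1 H2
      simp only [Int.abs_eq_natAbs]
      omega
    · obtain ⟨k1, k2⟩ := key1 hB (show (b:ℤ) ≤ (a:ℤ) by exact_mod_cast hab)
        (by positivity) (show (t':ℤ) ≤ (b:ℤ) by exact_mod_cast hq) (by positivity) hTA
        H2 H1
      simp only [Int.abs_eq_natAbs]
      omega
  · obtain ⟨k1, k2, k3⟩ := key2 hA hB (by positivity) hTA (by exact_mod_cast hq) H1 H2
    have hfb : f b t' = ((b:ℤ) - t', 2*(b:ℤ) - t') := by
      have hnb : ¬ (t' ≤ b) := by omega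
      have h2b : t' ≤ 2*b := by exact_mod_cast (by linarith : (t':ℤ) ≤ 2*b)
      simp [f, hnb, h2b]
    rw [hfa, hfb]
    simp only [Int.abs_eq_natAbs]
    omega

lemma dist_f_le {a b : ℕ} (ha : 1 ≤ a) (hb : 1 ≤ b) : ∀ t' t : ℕ, t < 4*a → t' < 4*b →
    t*b < (t'+1)*a → t'*a < (t+1)*b →
    |(f a t).1 - (f b t').1| + |(f a t).2 - (f b t').2| ≤ |(a:ℤ) - b| := by
  intro t'
  induction t' using Nat.strong_induction_on with
  | _ t' IH =>
    intro t ht ht' h1 h2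
    rcases le_or_gt t a with hta | hta
    · exact dist_core ha hb hta ht' h1 h2
    · have hA : (1:ℤ) ≤ a := by exact_mod_cast ha
      have hB : (1:ℤ) ≤ b := by exact_mod_cast hb
      have H1 : (t:ℤ)*b < ((t':ℤ)+1)*a := by exact_mod_cast h1
      have htb : b ≤ t' := by
        have := t_ge hA hB (by positivity) (by positivity) (by exact_mod_cast hta) H1
        exact_mod_cast this
      have e1 : f a t = (-(f a (t-a)).2, (f a (t-a)).1) := rot_f ha (le_of_lt hta) ht
      have e2 : f b t' = (-(f b (t'-b)).2, (f b (t'-b)).1) := rot_f hb htb ht'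
      have H2 : (t':ℤ)*a < ((t:ℤ)+1)*b := by exact_mod_cast h2
      have h1' : (t-a)*b < ((t'-b)+1)*a := by
        zify [le_of_lt hta, htb]
        nlinarith
      have h2' : (t'-b)*a < ((t-a)+1)*b := by
        zify [le_of_lt hta, htb]
        nlinarith
      have := IH (t'-b) (by omega) (t-a) (by omega) (by omega) h1' h2'
      rw [e1, e2]
      calc |-(f a (t-a)).2 - -(f b (t'-b)).2| + |(f a (t-a)).1 - (f b (t'-b)).1|
          = |(f a (t-a)).1 - (f b (t'-b)).1| + |(f a (t-a)).2 - (f b (t'-b)).2| := by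
            rw [show -(f a (t-a)).2 - -(f b (t'-b)).2 = -((f a (t-a)).2 - (f b (t'-b)).2) by ring,
              abs_neg]; ring
        _ ≤ |(a:ℤ) - b| := this

def w (a b t t' : ℕ) : ℕ := min ((t+1)*b) ((t'+1)*a) - max (t*b) (t'*a)

lemma clamp_sub (A B X Y : ℕ) (hAB : A ≤ B) (hXY : X ≤ Y) :
    min B Y - max A X = min B (max A Y) - min B (max A X) := by omega

lemma w_symm (a b t t' : ℕ) : w a b t t' = w b a t' t := by
  unfold w; rw [min_comm, max_comm]

lemma overlap_of_w_pos {a b t t' : ℕ} (h : w a b t t' ≠ 0) :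
    t*b < (t'+1)*a ∧ t'*a < (t+1)*b := by
  unfold w at h
  constructor <;> omega

lemma w_marginal {a b : ℕ} (hb : 1 ≤ b) {t : ℕ} (ht : t < 4*a) :
    ∑ t' ∈ Finset.range (4*b), w a b t t' = b := by
  have hmono : Monotone (fun x => min ((t+1)*b) (max (t*b) x)) := by
    intro x y hxy
    exact min_le_min le_rfl (max_le_max le_rfl hxy)
  have hrw : ∀ t', w a b t t' =
      (fun i => min ((t+1)*b) (max (t*b) (i*a))) (t'+1)
      - (fun i => min ((t+1)*b) (max (t*b) (i*a))) t' := by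
    intro t'
    simp only
    exact clamp_sub (t*b) ((t+1)*b) (t'*a) ((t'+1)*a)
      (Nat.mul_le_mul_right _ (by omega)) (Nat.mul_le_mul_right _ (by omega))
  rw [Finset.sum_congr rfl (fun t' _ => hrw t')]
  rw [Finset.sum_range_tsub (fun i j hij => hmono (Nat.mul_le_mul_right _ hij))]
  simp only
  have h1 : t*b ≤ 4*b*a := by
    calc t*b ≤ 4*a*b := Nat.mul_le_mul_right _ (by omega)
    _ = 4*b*a := by ring
  have h2 : (t+1)*b ≤ 4*b*a := by
    calc (t+1)*b ≤ 4*a*b := Nat.mul_le_mul_right _ (by omega)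
    _ = 4*b*a := by ring
  rw [Nat.zero_mul, Nat.max_eq_right h1, Nat.max_eq_left (Nat.zero_le _), Nat.min_eq_left h2,
    Nat.min_eq_right (Nat.mul_le_mul_right _ (by omega : t ≤ t+1)), Nat.succ_mul]
  omega

def sph (k : ℕ) : Type := {u : ℤ × ℤ // |u.1| + |u.2| = (k:ℤ)}

lemma sph_finite (k : ℕ) : Set.Finite {u : ℤ × ℤ | |u.1| + |u.2| = (k:ℤ)} := by
  apply Set.Finite.subset (Set.finite_Icc ((-(k:ℤ), -(k:ℤ))) ((k:ℤ), (k:ℤ)))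
  rintro ⟨x, y⟩ h
  simp only [Set.mem_setOf_eq] at h
  simp only [Set.mem_Icc, Prod.le_def]
  constructor <;> constructor <;> simp only [Int.abs_eq_natAbs] at h <;> omega

noncomputable instance (k : ℕ) : Fintype (sph k) := (sph_finite k).fintype

noncomputable def eK {k : ℕ} (hk : 1 ≤ k) : Fin (4*k) ≃ sph k :=
  Equiv.ofBijective (fun t : Fin (4*k) => (⟨f k t.1, norm_f hk t.2⟩ : sph k))
    ⟨fun t t' h => Fin.ext (f_inj t.2 t'.2 (congrArg Subtype.val h)),
     fun v => by
      obtain ⟨t, ht, hft⟩ := f_surj hk v.1 v.2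
      exact ⟨⟨t, ht⟩, Subtype.ext hft⟩⟩

lemma sum_sph_eq {k : ℕ} (hk : 1 ≤ k) (g : ℤ × ℤ → ℝ) :
    ∑ u : sph k, g u.1 = ∑ t ∈ Finset.range (4*k), g (f k t) := by
  rw [← Fintype.sum_equiv (eK hk) (fun t : Fin (4*k) => g (f k t.1)) (fun u => g u.1)
    (fun t => rfl)]
  exact Fin.sum_univ_eq_sum_range (fun i => g (f k i)) (4*k)

lemma tsum_sph_eq {k : ℕ} (hk : 1 ≤ k) (g : ℤ × ℤ → ℝ) :
    ∑' u : sph k, g u.1 = ∑ t ∈ Finset.range (4*k), g (f k t) := by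
  rw [tsum_fintype]; exact sum_sph_eq hk g

lemma card_sph {k : ℕ} (hk : 1 ≤ k) : Fintype.card (sph k) = 4*k := by
  rw [← Fintype.card_congr (eK hk), Fintype.card_fin]

instance : Unique (sph 0) := by
  refine ⟨⟨⟨(0,0), by simp⟩⟩, ?_⟩
  rintro ⟨⟨x,y⟩, h⟩
  have hx : x = 0 ∧ y = 0 := by
    simp only [Int.abs_eq_natAbs] at h; constructor <;> omega
  simp only [default]
  exact Subtype.ext (by simp [hx.1, hx.2])

noncomputable def E : (Σ k : ℕ, sph k) ≃ ℤ × ℤ := by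
  apply Equiv.ofBijective (fun x => x.2.1)
  constructor
  · rintro ⟨k, u, hu⟩ ⟨k', u', hu'⟩ h
    simp only at h
    subst h
    have : k = k' := by
      have : (k:ℤ) = k' := by rw [← hu, ← hu']
      exact_mod_cast this
    subst this
    rfl
  · intro v
    refine ⟨⟨(|v.1| + |v.2|).toNat, ⟨v, ?_⟩⟩, rfl⟩
    have : 0 ≤ |v.1| + |v.2| := by positivity
    omega

lemma sphere_sum_le {ε : ℝ} {Δ : ℕ} (p : ℤ × ℤ → ℝ) (hp_nonneg : ∀ v, 0 ≤ p v)
    (hp_dp : ∀ u v : ℤ × ℤ, |u.1 - v.1| + |u.2 - v.2| ≤ (Δ : ℤ) → p u ≤ Real.exp ε * p v)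
    {a b : ℕ} (ha : 1 ≤ a) (hb : 1 ≤ b) (hab : |(a:ℤ) - b| ≤ (Δ:ℤ)) :
    (b:ℝ) * ∑ t ∈ Finset.range (4*a), p (f a t) ≤
      Real.exp ε * ((a:ℝ) * ∑ t' ∈ Finset.range (4*b), p (f b t')) := by
  have step1 : (b:ℝ) * ∑ t ∈ Finset.range (4*a), p (f a t)
      = ∑ t ∈ Finset.range (4*a), ∑ t' ∈ Finset.range (4*b), (w a b t t' : ℝ) * p (f a t) := by
    rw [Finset.mul_sum]
    refine Finset.sum_congr rfl (fun t htm => ?_)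
    rw [← Finset.sum_mul]
    congr 1
    rw [← Nat.cast_sum]
    rw [w_marginal hb (Finset.mem_range.mp htm)]
  have step2 : ∀ t ∈ Finset.range (4*a), ∀ t' ∈ Finset.range (4*b),
      (w a b t t' : ℝ) * p (f a t) ≤ (w a b t t' : ℝ) * (Real.exp ε * p (f b t')) := by
    intro t htm t' ht'm
    rcases eq_or_ne (w a b t t') 0 with hw | hw
    · simp [hw]
    · apply mul_le_mul_of_nonneg_left _ (by positivity)
      apply hp_dp
      obtain ⟨o1, o2⟩ := overlap_of_w_pos hw
      calc |(f a t).1 - (f b t').1| + |(f a t).2 - (f b t').2| ≤ |(a:ℤ) - b| :=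
            dist_f_le ha hb t' t (Finset.mem_range.mp htm) (Finset.mem_range.mp ht'm) o1 o2
        _ ≤ (Δ:ℤ) := hab
  have step3 : ∑ t ∈ Finset.range (4*a), ∑ t' ∈ Finset.range (4*b),
      (w a b t t' : ℝ) * (Real.exp ε * p (f b t'))
      = Real.exp ε * ((a:ℝ) * ∑ t' ∈ Finset.range (4*b), p (f b t')) := by
    rw [Finset.sum_comm]
    have : ∀ t' ∈ Finset.range (4*b), ∑ t ∈ Finset.range (4*a),
        (w a b t t' : ℝ) * (Real.exp ε * p (f b t'))
        = (a:ℝ) * (Real.exp ε * p (f b t')) := by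
      intro t' ht'm
      rw [← Finset.sum_mul]
      congr 1
      rw [← Nat.cast_sum]
      norm_cast
      rw [Finset.sum_congr rfl (fun t _ => w_symm a b t t')]
      exact w_marginal ha (Finset.mem_range.mp ht'm)
    rw [Finset.sum_congr rfl this, ← Finset.mul_sum, Finset.mul_sum, Finset.mul_sum,
      Finset.mul_sum]
    refine Finset.sum_congr rfl (fun t' _ => by ring)
  calc (b:ℝ) * ∑ t ∈ Finset.range (4*a), p (f a t)
      = ∑ t ∈ Finset.range (4*a), ∑ t' ∈ Finset.range (4*b), (w a b t t' : ℝ) * p (f a t) := step1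
    _ ≤ ∑ t ∈ Finset.range (4*a), ∑ t' ∈ Finset.range (4*b),
        (w a b t t' : ℝ) * (Real.exp ε * p (f b t')) :=
        Finset.sum_le_sum (fun t htm => Finset.sum_le_sum (fun t' ht'm => step2 t htm t' ht'm))
    _ = Real.exp ε * ((a:ℝ) * ∑ t' ∈ Finset.range (4*b), p (f b t')) := step3

end AvgDP

open AvgDP

/-- Lemma 2: averaging a differentially private probability mass function on ℤ²
over each ℓ¹ sphere yields a probability mass function that still satisfies the
discrete ε-differential-privacy constraint. -/
theorem average_preserves_dp (ε : ℝ) (hε : 0 < ε) (Δ : ℕ) (hΔ : 0 < Δ)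
    (p : ℤ × ℤ → ℝ) (hp_nonneg : ∀ v, 0 ≤ p v) (hp_sum : HasSum p 1)
    (hp_dp : ∀ u v : ℤ × ℤ, |u.1 - v.1| + |u.2 - v.2| ≤ (Δ : ℤ) →
      p u ≤ Real.exp ε * p v)
    (ptilde : ℤ × ℤ → ℝ)
    (hpt_zero : ptilde (0, 0) = p (0, 0))
    (hpt : ∀ v : ℤ × ℤ, v ≠ (0, 0) →
      ptilde v = (∑' u : {u : ℤ × ℤ // |u.1| + |u.2| = |v.1| + |v.2|}, p u) /
        (4 * ((|v.1| + |v.2| : ℤ) : ℝ))) :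
    HasSum ptilde 1 ∧
      ∀ u v : ℤ × ℤ, |u.1 - v.1| + |u.2 - v.2| ≤ (Δ : ℤ) →
        ptilde u ≤ Real.exp ε * ptilde v := by
  have hkey : ∀ v : ℤ × ℤ, v ≠ (0,0) → ∃ k : ℕ, 1 ≤ k ∧ |v.1| + |v.2| = (k:ℤ) := by
    intro v hv
    have h1 : ¬(v.1 = 0 ∧ v.2 = 0) := by
      rintro ⟨h1, h2⟩; exact hv (by rw [Prod.ext_iff]; exact ⟨h1, h2⟩)
    refine ⟨(|v.1| + |v.2|).toNat, ?_, ?_⟩ <;> simp only [Int.abs_eq_natAbs] <;> omega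
  have hval : ∀ (v : ℤ × ℤ) (k : ℕ), 1 ≤ k → |v.1| + |v.2| = (k:ℤ) →
      ptilde v = (∑ t ∈ Finset.range (4*k), p (f k t)) / ((4*k : ℕ) : ℝ) := by
    intro v k hk hvk
    have hv0 : v ≠ (0,0) := by
      intro h; subst h; simp at hvk; omega
    rw [hpt v hv0]
    have e1 : (∑' u : {u : ℤ × ℤ // |u.1| + |u.2| = |v.1| + |v.2|}, p u)
        = ∑ t ∈ Finset.range (4*k), p (f k t) := by
      rw [show (|v.1| + |v.2|) = (k:ℤ) from hvk]
      exact tsum_sph_eq hk p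
    rw [e1, hvk]
    norm_cast
  have hptnn : ∀ v, 0 ≤ ptilde v := by
    intro v
    rcases eq_or_ne v (0,0) with rfl | hv
    · rw [hpt_zero]; exact hp_nonneg _
    · obtain ⟨k, hk, hvk⟩ := hkey v hv
      rw [hval v k hk hvk]
      apply div_nonneg (Finset.sum_nonneg fun t _ => hp_nonneg _)
      positivity
  constructor
  · -- HasSum ptilde 1
    have hSeq : ∀ k : ℕ, ∑ u : sph k, ptilde u.1 = ∑ u : sph k, p u.1 := by
      intro k
      rcases Nat.eq_zero_or_pos k with rfl | hk
      · rw [Fintype.sum_unique, Fintype.sum_unique]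
        exact hpt_zero
      · have hconst : ∀ u : sph k,
            ptilde u.1 = (∑ t ∈ Finset.range (4*k), p (f k t)) / ((4*k:ℕ):ℝ) :=
          fun u => hval u.1 k hk u.2
        rw [Finset.sum_congr rfl (fun u _ => hconst u), Finset.sum_const, Finset.card_univ,
          card_sph hk, nsmul_eq_mul, sum_sph_eq hk p]
        have hne : ((4*k:ℕ):ℝ) ≠ 0 := by
          have : (0:ℕ) < 4*k := by omega
          exact_mod_cast this.ne'
        field_simp
    have hE1 : HasSum (fun x : Σ k : ℕ, sph k => p (E x)) 1 := (Equiv.hasSum_iff E).mpr hp_sum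
    have hG : HasSum (fun k => ∑ u : sph k, p u.1) 1 :=
      HasSum.sigma hE1 (fun k => hasSum_fintype _)
    have hG' : HasSum (fun k => ∑ u : sph k, ptilde u.1) 1 := by
      simpa only [hSeq] using hG
    have hnn : ∀ x : Σ k : ℕ, sph k, 0 ≤ ptilde (E x) := fun x => hptnn _
    have hsummable : Summable (fun x : Σ k : ℕ, sph k => ptilde (E x)) := by
      apply (summable_sigma_of_nonneg hnn).mpr
      refine ⟨fun k => (hasSum_fintype _).summable, ?_⟩
      simp only [tsum_fintype]
      exact hG'.summable
    have hS2 := hsummable.hasSum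
    have hsig := HasSum.sigma hS2 (fun k =>
      (hasSum_fintype (fun u : sph k => ptilde (E ⟨k, u⟩))))
    have h1 : (∑' x : Σ k : ℕ, sph k, ptilde (E x)) = 1 := hsig.unique hG'
    rw [h1] at hS2
    exact (Equiv.hasSum_iff E).mp hS2
  · -- DP property
    intro u v huv
    rcases eq_or_ne u (0,0) with hu0 | hu0
    · rcases eq_or_ne v (0,0) with hv0 | hv0
      · subst hu0; subst hv0
        rw [hpt_zero]
        nlinarith [Real.one_le_exp hε.le, hp_nonneg ((0,0) : ℤ × ℤ)]
      · subst hu0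
        obtain ⟨b, hb, hvb⟩ := hkey v hv0
        have hbΔ : (b:ℤ) ≤ Δ := by
          have h' : |v.1| + |v.2| ≤ (Δ:ℤ) := by simpa using huv
          rw [hvb] at h'; exact h'
        rw [hpt_zero, hval v b hb hvb]
        have hpos : (0:ℝ) < ((4*b:ℕ):ℝ) := by
          have : (0:ℕ) < 4*b := by omega
          exact_mod_cast this
        rw [← mul_div_assoc, le_div_iff₀ hpos]
        have hterm : ∀ t ∈ Finset.range (4*b), p (0,0) ≤ Real.exp ε * p (f b t) := by
          intro t htm
          apply hp_dp
          have hn := norm_f hb (Finset.mem_range.mp htm)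
          calc |((0,0):ℤ×ℤ).1 - (f b t).1| + |((0,0):ℤ×ℤ).2 - (f b t).2|
              = |(f b t).1| + |(f b t).2| := by simp
            _ = (b:ℤ) := hn
            _ ≤ (Δ:ℤ) := hbΔ
        calc p (0,0) * ((4*b:ℕ):ℝ) = ∑ _t ∈ Finset.range (4*b), p (0,0) := by
              rw [Finset.sum_const, Finset.card_range, nsmul_eq_mul]; ring
          _ ≤ ∑ t ∈ Finset.range (4*b), Real.exp ε * p (f b t) := Finset.sum_le_sum hterm
          _ = Real.exp ε * ∑ t ∈ Finset.range (4*b), p (f b t) := by rw [Finset.mul_sum]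
    · rcases eq_or_ne v (0,0) with hv0 | hv0
      · subst hv0
        obtain ⟨a, ha, hua⟩ := hkey u hu0
        have haΔ : (a:ℤ) ≤ Δ := by
          have h' : |u.1| + |u.2| ≤ (Δ:ℤ) := by simpa using huv
          rw [hua] at h'; exact h'
        rw [hval u a ha hua, hpt_zero]
        have hpos : (0:ℝ) < ((4*a:ℕ):ℝ) := by
          have : (0:ℕ) < 4*a := by omega
          exact_mod_cast this
        rw [div_le_iff₀ hpos]
        have hterm : ∀ t ∈ Finset.range (4*a), p (f a t) ≤ Real.exp ε * p (0,0) := by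
          intro t htm
          apply hp_dp
          have hn := norm_f ha (Finset.mem_range.mp htm)
          calc |(f a t).1 - ((0,0):ℤ×ℤ).1| + |(f a t).2 - ((0,0):ℤ×ℤ).2|
              = |(f a t).1| + |(f a t).2| := by simp
            _ = (a:ℤ) := hn
            _ ≤ (Δ:ℤ) := haΔ
        calc ∑ t ∈ Finset.range (4*a), p (f a t)
            ≤ ∑ _t ∈ Finset.range (4*a), Real.exp ε * p (0,0) := Finset.sum_le_sum hterm
          _ = Real.exp ε * p (0,0) * ((4*a:ℕ):ℝ) := by
              rw [Finset.sum_const, Finset.card_range, nsmul_eq_mul]; ring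
      · obtain ⟨a, ha, hua⟩ := hkey u hu0
        obtain ⟨b, hb, hvb⟩ := hkey v hv0
        have habΔ : |(a:ℤ) - b| ≤ (Δ:ℤ) := by
          rw [← hua, ← hvb]
          simp only [Int.abs_eq_natAbs] at huv ⊢
          omega
        rw [hval u a ha hua, hval v b hb hvb]
        have hs := sphere_sum_le p hp_nonneg hp_dp ha hb habΔ
        have hpa : (0:ℝ) < ((4*a:ℕ):ℝ) := by
          have : (0:ℕ) < 4*a := by omega
          exact_mod_cast this
        have hpb : (0:ℝ) < ((4*b:ℕ):ℝ) := by
          have : (0:ℕ) < 4*b := by omega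
          exact_mod_cast this
        rw [← mul_div_assoc, div_le_div_iff₀ hpa hpb]
        push_cast at hs ⊢
        nlinarith [hs]
end
end

section
/- Let 1 ≤ k₁ < k₂ be integers and set Δ' = k₂ − k₁. Let B_k = {(i,j) ∈ ℤ² : |i|+|j| = k}. Then there exists a function M : B_{k₁} × B_{k₂} → ℝ such that: (1) M(u,v) ≥ 0 for all u, v; (2) M(u,v) = 0 whenever the ℓ¹ distance between u and v is not equal to Δ'; (3) Σ_{v ∈ B_{k₂}} M(u,v) = (k₁ + Δ')/k₁ = k₂/k₁ for every u ∈ B_{k₁}; and (4) Σ_{u ∈ B_{k₁}} M(u,v) = 1 for every v ∈ B_{k₂}. (The matrix filling-in lemma used in the proof of Lemma 2.) -/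
open scoped BigOperators

noncomputable section

/-- x-coordinate of the `a`-th point of the ℓ¹ sphere of radius `k`. -/
def ptx (k a : ℤ) : ℤ := if a < 2*k then k - a else a - 3*k

/-- y-coordinate of the `a`-th point of the ℓ¹ sphere of radius `k`. -/
def pty (k a : ℤ) : ℤ := if a < k then a else if a < 3*k then 2*k - a else a - 4*k

/-- index of a point of the ℓ¹ sphere of radius `k`. -/
def idx (k : ℤ) (u : ℤ × ℤ) : ℤ :=
  if 0 < u.1 ∧ 0 ≤ u.2 then u.2
  else if u.1 ≤ 0 ∧ 0 < u.2 then k - u.1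
  else if u.1 < 0 ∧ u.2 ≤ 0 then 2*k - u.2
  else 3*k + u.1

lemma idx_spec (k : ℤ) (hk : 1 ≤ k) (u : ℤ × ℤ) (hu : |u.1| + |u.2| = k) :
    0 ≤ idx k u ∧ idx k u < 4*k ∧ ptx k (idx k u) = u.1 ∧ pty k (idx k u) = u.2 := by
  simp only [Int.abs_eq_natAbs] at hu
  simp only [idx, ptx, pty]
  split_ifs <;> omega

lemma pt_on_sphere (k a : ℤ) (hk : 1 ≤ k) (ha : 0 ≤ a) (ha' : a < 4*k) :
    |ptx k a| + |pty k a| = k := by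
  simp only [ptx, pty, Int.abs_eq_natAbs]
  split_ifs <;> omega

lemma idx_pt (k a : ℤ) (hk : 1 ≤ k) (ha : 0 ≤ a) (ha' : a < 4*k) :
    idx k (ptx k a, pty k a) = a := by
  simp only [ptx, pty, idx]
  split_ifs <;> omega

lemma core (k₁ k₂ a b : ℤ) (hk₁ : 1 ≤ k₁) (hk : k₁ < k₂) (ha : 0 ≤ a) (ha' : a < k₁)
    (hb : 0 ≤ b) (h1 : a*k₂ < (b+1)*k₁) (h2 : b*k₁ < (a+1)*k₂) :
    a ≤ b ∧ b ≤ a + (k₂ - k₁) := by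
  constructor
  · nlinarith [mul_le_mul_of_nonneg_left hk.le ha]
  · nlinarith [mul_nonneg (by linarith : (0:ℤ) ≤ k₂ - k₁) (by linarith : (0:ℤ) ≤ k₁ - 1 - a)]

lemma geo (k₁ k₂ a b : ℤ) (hk₁ : 1 ≤ k₁) (hk : k₁ < k₂) (ha : 0 ≤ a) (ha' : a < 4*k₁)
    (hb : 0 ≤ b) (hb' : b < 4*k₂) (h1 : a*k₂ < (b+1)*k₁) (h2 : b*k₁ < (a+1)*k₂) :
    |ptx k₁ a - ptx k₂ b| + |pty k₁ a - pty k₂ b| = k₂ - k₁ := by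
  have hk₂ : 1 ≤ k₂ := by linarith
  -- determine the quadrant of a
  obtain ⟨q, hq0, hq3, hqa, hqa'⟩ :
      ∃ q : ℤ, 0 ≤ q ∧ q ≤ 3 ∧ q*k₁ ≤ a ∧ a < (q+1)*k₁ := by
    refine ⟨a / k₁, Int.ediv_nonneg ha (by linarith), ?_, ?_, ?_⟩
    · by_contra h
      push_neg at h
      have h4 : 4 ≤ a / k₁ := by omega
      have := Int.ediv_mul_le a (b := k₁) (by omega)
      nlinarith [Int.ediv_mul_le a (b := k₁) (by omega : k₁ ≠ 0)]
    · have := Int.ediv_mul_le a (b := k₁) (by omega : k₁ ≠ 0)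
      linarith [this]
    · exact Int.lt_ediv_add_one_mul_self a (by linarith)
  -- b lies in the same quadrant
  have hbq : q*k₂ ≤ b := by nlinarith [mul_le_mul_of_nonneg_right hqa (by linarith : (0:ℤ) ≤ k₂)]
  have hbq' : b < (q+1)*k₂ := by
    nlinarith [mul_le_mul_of_nonneg_right (by linarith : a + 1 ≤ (q+1)*k₁)
      (by linarith : (0:ℤ) ≤ k₂)]
  -- reduce to the core inequality
  have hcore := core k₁ k₂ (a - q*k₁) (b - q*k₂) hk₁ hk (by linarith) (by linarith)
    (by linarith) (by nlinarith [h1]) (by nlinarith [h2])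
  obtain ⟨hc1, hc2⟩ := hcore
  interval_cases q <;>
    (simp only [ptx, pty]; split_ifs <;> simp only [Int.abs_eq_natAbs] <;>
      (try omega) <;> push_cast <;> omega)

/-- overlap clamp identity -/
lemma clamp (s e t₁ t₂ : ℝ) (hse : s ≤ e) (ht : t₁ ≤ t₂) :
    max 0 (min e t₂ - max s t₁) =
      min e (max s t₂) - min e (max s t₁) := by
  simp only [max_def, min_def]
  split_ifs <;> linarith

lemma clamp' (s e t₁ t₂ : ℝ) (hse : s ≤ e) (ht : t₁ ≤ t₂) :
    max 0 (min t₂ e - max t₁ s) =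
      min e (max s t₂) - min e (max s t₁) := by
  rw [min_comm t₂ e, max_comm t₁ s]
  exact clamp s e t₁ t₂ hse ht

/-- the matrix -/
noncomputable def Mfun (k₁ k₂ : ℤ) (u v : ℤ × ℤ) : ℝ :=
  if |u.1| + |u.2| = k₁ ∧ |v.1| + |v.2| = k₂ then
    (k₂ : ℝ) * max 0 (min (((idx k₁ u : ℤ) + 1 : ℤ) / (k₁ : ℝ)) (((idx k₂ v : ℤ) + 1 : ℤ) / (k₂ : ℝ))
      - max ((idx k₁ u : ℝ) / (k₁ : ℝ)) ((idx k₂ v : ℝ) / (k₂ : ℝ)))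
  else 0

/-- the finset of points of B_k -/
def sphereFinset (k : ℤ) : Finset (ℤ × ℤ) :=
  (Finset.range (4*k).toNat).image (fun n : ℕ => (ptx k (n : ℤ), pty k (n : ℤ)))

lemma mem_sphereFinset (k : ℤ) (hk : 1 ≤ k) (x : ℤ × ℤ) :
    x ∈ sphereFinset k ↔ |x.1| + |x.2| = k := by
  simp only [sphereFinset, Finset.mem_image, Finset.mem_range]
  constructor
  · rintro ⟨n, hn, rfl⟩
    exact pt_on_sphere k n hk (Int.natCast_nonneg n) (by omega)
  · intro hx
    obtain ⟨h0, h4, hx1, hx2⟩ := idx_spec k hk x hx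
    refine ⟨(idx k x).toNat, by omega, ?_⟩
    rw [Int.toNat_of_nonneg h0, hx1, hx2]

lemma Mfun_eval (k₁ k₂ : ℤ) (u v : ℤ × ℤ) (hu : |u.1| + |u.2| = k₁)
    (hv : |v.1| + |v.2| = k₂) :
    Mfun k₁ k₂ u v = (k₂ : ℝ) * max 0
      (min (((idx k₁ u : ℝ) + 1) / (k₁ : ℝ)) (((idx k₂ v : ℝ) + 1) / (k₂ : ℝ))
        - max ((idx k₁ u : ℝ) / (k₁ : ℝ)) ((idx k₂ v : ℝ) / (k₂ : ℝ))) := by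
  unfold Mfun
  rw [if_pos ⟨hu, hv⟩]
  push_cast
  ring_nf

/-- The matrix filling-in lemma: for ℓ¹ spheres B_{k₁} and B_{k₂} in ℤ² with
1 ≤ k₁ < k₂, there is a nonnegative matrix supported on pairs at ℓ¹ distance
Δ' = k₂ − k₁ whose row sums are all k₂/k₁ and whose column sums are all 1. -/
theorem matrix_filling (k₁ k₂ : ℤ) (hk₁ : 1 ≤ k₁) (hk : k₁ < k₂) :
    ∃ M : (ℤ × ℤ) → (ℤ × ℤ) → ℝ,
      (∀ u v : ℤ × ℤ, 0 ≤ M u v) ∧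
      (∀ u v : ℤ × ℤ, |u.1 - v.1| + |u.2 - v.2| ≠ k₂ - k₁ → M u v = 0) ∧
      (∀ u : {u : ℤ × ℤ // |u.1| + |u.2| = k₁},
        ∑' v : {v : ℤ × ℤ // |v.1| + |v.2| = k₂}, M u v = (k₂ : ℝ) / (k₁ : ℝ)) ∧
      (∀ v : {v : ℤ × ℤ // |v.1| + |v.2| = k₂},
        ∑' u : {u : ℤ × ℤ // |u.1| + |u.2| = k₁}, M u v = 1) := by
  have hk₂ : 1 ≤ k₂ := by linarith
  have hK₁ : (0:ℝ) < (k₁ : ℝ) := by exact_mod_cast (by linarith : (0:ℤ) < k₁)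
  have hK₂ : (0:ℝ) < (k₂ : ℝ) := by exact_mod_cast (by linarith : (0:ℤ) < k₂)
  refine ⟨Mfun k₁ k₂, ?_, ?_, ?_, ?_⟩
  · intro u v
    unfold Mfun
    split_ifs
    · exact mul_nonneg hK₂.le (le_max_left _ _)
    · exact le_refl 0
  · -- support condition
    intro u v hd
    by_cases h : |u.1| + |u.2| = k₁ ∧ |v.1| + |v.2| = k₂
    swap
    · unfold Mfun; rw [if_neg h]
    obtain ⟨hu, hv⟩ := h
    obtain ⟨ha0, ha4, hux, huy⟩ := idx_spec k₁ hk₁ u hu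
    obtain ⟨hb0, hb4, hvx, hvy⟩ := idx_spec k₂ hk₂ v hv
    rw [Mfun_eval k₁ k₂ u v hu hv]
    set A := idx k₁ u with hA
    set B := idx k₂ v with hB
    rcases le_or_gt (min (((A : ℝ) + 1) / (k₁:ℝ)) (((B : ℝ) + 1) / (k₂:ℝ))
        - max ((A : ℝ) / (k₁:ℝ)) ((B : ℝ) / (k₂:ℝ))) 0 with hle | hgt
    · rw [max_eq_left hle, mul_zero]
    exfalso
    apply hd
    have l1 : (A : ℝ) / (k₁:ℝ) < ((B:ℝ) + 1) / (k₂:ℝ) := by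
      have t1 := le_max_left ((A : ℝ) / (k₁:ℝ)) ((B : ℝ) / (k₂:ℝ))
      have t2 := min_le_right (((A : ℝ) + 1) / (k₁:ℝ)) (((B : ℝ) + 1) / (k₂:ℝ))
      linarith
    have l2 : (B : ℝ) / (k₂:ℝ) < ((A:ℝ) + 1) / (k₁:ℝ) := by
      have t1 := le_max_right ((A : ℝ) / (k₁:ℝ)) ((B : ℝ) / (k₂:ℝ))
      have t2 := min_le_left (((A : ℝ) + 1) / (k₁:ℝ)) (((B : ℝ) + 1) / (k₂:ℝ))
      linarith
    have h1 : A * k₂ < (B + 1) * k₁ := by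
      have := (div_lt_div_iff₀ hK₁ hK₂).mp l1
      exact_mod_cast this
    have h2 : B * k₁ < (A + 1) * k₂ := by
      have := (div_lt_div_iff₀ hK₂ hK₁).mp l2
      exact_mod_cast this
    have hgeo := geo k₁ k₂ A B hk₁ hk ha0 ha4 hb0 hb4 h1 h2
    rw [hux, huy, hvx, hvy] at hgeo
    exact hgeo
  · -- row sums
    rintro ⟨u, hu⟩
    obtain ⟨ha0, ha4, hux, huy⟩ := idx_spec k₁ hk₁ u hu
    set A := idx k₁ u with hA
    set g : ℕ → ℝ := fun n =>
      min (((A:ℝ) + 1) / (k₁:ℝ)) (max ((A:ℝ) / (k₁:ℝ)) ((n:ℝ) / (k₂:ℝ))) with hg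
    haveI : Fintype {v : ℤ × ℤ // |v.1| + |v.2| = k₂} :=
      Fintype.ofFinset (sphereFinset k₂) (mem_sphereFinset k₂ hk₂)
    rw [tsum_fintype]
    rw [← Finset.sum_subtype (sphereFinset k₂) (mem_sphereFinset k₂ hk₂)
      (fun v => Mfun k₁ k₂ u v)]
    rw [sphereFinset, Finset.sum_image (by
      intro m hm n hn hmn
      simp only [Finset.mem_coe, Finset.mem_range] at hm hn
      beta_reduce at hmn
      have e1 := idx_pt k₂ (m:ℤ) hk₂ (Int.natCast_nonneg m) (by omega)
      have e2 := idx_pt k₂ (n:ℤ) hk₂ (Int.natCast_nonneg n) (by omega)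
      rw [hmn] at e1
      rw [e2] at e1
      exact_mod_cast e1.symm)]
    have hterm : ∀ n ∈ Finset.range (4*k₂).toNat,
        Mfun k₁ k₂ u (ptx k₂ (n:ℤ), pty k₂ (n:ℤ)) = (k₂:ℝ) * (g (n+1) - g n) := by
      intro n hn
      simp only [Finset.mem_range] at hn
      have hn4 : (n:ℤ) < 4*k₂ := by omega
      have hon := pt_on_sphere k₂ (n:ℤ) hk₂ (Int.natCast_nonneg n) hn4
      rw [Mfun_eval k₁ k₂ u _ hu hon, idx_pt k₂ (n:ℤ) hk₂ (Int.natCast_nonneg n) hn4]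
      congr 1
      rw [← hA]
      have hse : (A:ℝ)/(k₁:ℝ) ≤ ((A:ℝ)+1)/(k₁:ℝ) := by
        apply (div_le_div_iff_of_pos_right hK₁).mpr; linarith
      have hst : ((n:ℤ):ℝ)/(k₂:ℝ) ≤ (((n:ℤ):ℝ)+1)/(k₂:ℝ) := by
        apply (div_le_div_iff_of_pos_right hK₂).mpr; linarith
      have hc := clamp ((A:ℝ)/(k₁:ℝ)) (((A:ℝ)+1)/(k₁:ℝ))
        (((n:ℤ):ℝ)/(k₂:ℝ)) ((((n:ℤ):ℝ)+1)/(k₂:ℝ)) hse hst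
      rw [hc]
      simp only [hg]
      push_cast
      ring_nf
    rw [Finset.sum_congr rfl hterm, ← Finset.mul_sum,
      Finset.sum_range_sub (fun n => g n)]
    have hN : (((4*k₂).toNat : ℕ) : ℝ) = 4*(k₂:ℝ) := by
      have := Int.toNat_of_nonneg (show (0:ℤ) ≤ 4*k₂ by linarith)
      exact_mod_cast congrArg (fun z : ℤ => (z:ℝ)) this
    have hs4 : (A:ℝ)/(k₁:ℝ) ≤ 4 := by
      rw [div_le_iff₀ hK₁]
      have : (A:ℝ) < 4*(k₁:ℝ) := by exact_mod_cast ha4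
      linarith
    have he4 : ((A:ℝ)+1)/(k₁:ℝ) ≤ 4 := by
      rw [div_le_iff₀ hK₁]
      have : (A:ℝ)+1 ≤ 4*(k₁:ℝ) := by
        have : (A:ℝ) < 4*(k₁:ℝ) := by exact_mod_cast ha4
        have hA1 : (A:ℝ) + 1 ≤ 4*(k₁:ℝ) := by
          have : A + 1 ≤ 4*k₁ := by omega
          exact_mod_cast this
        linarith
      linarith
    have hs0 : (0:ℝ) ≤ (A:ℝ)/(k₁:ℝ) := by positivity
    have hse : (A:ℝ)/(k₁:ℝ) ≤ ((A:ℝ)+1)/(k₁:ℝ) := by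
      apply (div_le_div_iff_of_pos_right hK₁).mpr; linarith
    have hgN : g ((4*k₂).toNat) = ((A:ℝ)+1)/(k₁:ℝ) := by
      simp only [hg, hN]
      rw [show (4*(k₂:ℝ))/(k₂:ℝ) = 4 by field_simp]
      rw [max_eq_right hs4, min_eq_left he4]
    have hg0 : g 0 = (A:ℝ)/(k₁:ℝ) := by
      simp only [hg, Nat.cast_zero, zero_div]
      rw [max_eq_left hs0, min_eq_right hse]
    rw [hgN, hg0]
    field_simp
    ring
  · -- column sums
    rintro ⟨v, hv⟩
    obtain ⟨hb0, hb4, hvx, hvy⟩ := idx_spec k₂ hk₂ v hv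
    set B := idx k₂ v with hB
    set g : ℕ → ℝ := fun n =>
      min (((B:ℝ) + 1) / (k₂:ℝ)) (max ((B:ℝ) / (k₂:ℝ)) ((n:ℝ) / (k₁:ℝ))) with hg
    haveI : Fintype {u : ℤ × ℤ // |u.1| + |u.2| = k₁} :=
      Fintype.ofFinset (sphereFinset k₁) (mem_sphereFinset k₁ hk₁)
    rw [tsum_fintype]
    rw [← Finset.sum_subtype (sphereFinset k₁) (mem_sphereFinset k₁ hk₁)
      (fun u => Mfun k₁ k₂ u v)]
    rw [sphereFinset, Finset.sum_image (by
      intro m hm n hn hmn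
      simp only [Finset.mem_coe, Finset.mem_range] at hm hn
      beta_reduce at hmn
      have e1 := idx_pt k₁ (m:ℤ) hk₁ (Int.natCast_nonneg m) (by omega)
      have e2 := idx_pt k₁ (n:ℤ) hk₁ (Int.natCast_nonneg n) (by omega)
      rw [hmn] at e1
      rw [e2] at e1
      exact_mod_cast e1.symm)]
    have hterm : ∀ n ∈ Finset.range (4*k₁).toNat,
        Mfun k₁ k₂ (ptx k₁ (n:ℤ), pty k₁ (n:ℤ)) v = (k₂:ℝ) * (g (n+1) - g n) := by
      intro n hn
      simp only [Finset.mem_range] at hn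
      have hn4 : (n:ℤ) < 4*k₁ := by omega
      have hon := pt_on_sphere k₁ (n:ℤ) hk₁ (Int.natCast_nonneg n) hn4
      rw [Mfun_eval k₁ k₂ _ v hon hv, idx_pt k₁ (n:ℤ) hk₁ (Int.natCast_nonneg n) hn4]
      congr 1
      rw [← hB]
      have hse : (B:ℝ)/(k₂:ℝ) ≤ ((B:ℝ)+1)/(k₂:ℝ) := by
        apply (div_le_div_iff_of_pos_right hK₂).mpr; linarith
      have hst : ((n:ℤ):ℝ)/(k₁:ℝ) ≤ (((n:ℤ):ℝ)+1)/(k₁:ℝ) := by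
        apply (div_le_div_iff_of_pos_right hK₁).mpr; linarith
      have hc := clamp' ((B:ℝ)/(k₂:ℝ)) (((B:ℝ)+1)/(k₂:ℝ))
        (((n:ℤ):ℝ)/(k₁:ℝ)) ((((n:ℤ):ℝ)+1)/(k₁:ℝ)) hse hst
      rw [hc]
      simp only [hg]
      push_cast
      ring_nf
    rw [Finset.sum_congr rfl hterm, ← Finset.mul_sum,
      Finset.sum_range_sub (fun n => g n)]
    have hN : (((4*k₁).toNat : ℕ) : ℝ) = 4*(k₁:ℝ) := by
      have := Int.toNat_of_nonneg (show (0:ℤ) ≤ 4*k₁ by linarith)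
      exact_mod_cast congrArg (fun z : ℤ => (z:ℝ)) this
    have hs4 : (B:ℝ)/(k₂:ℝ) ≤ 4 := by
      rw [div_le_iff₀ hK₂]
      have : (B:ℝ) < 4*(k₂:ℝ) := by exact_mod_cast hb4
      linarith
    have he4 : ((B:ℝ)+1)/(k₂:ℝ) ≤ 4 := by
      rw [div_le_iff₀ hK₂]
      have : B + 1 ≤ 4*k₂ := by omega
      have : (B:ℝ)+1 ≤ 4*(k₂:ℝ) := by exact_mod_cast this
      linarith
    have hs0 : (0:ℝ) ≤ (B:ℝ)/(k₂:ℝ) := by positivity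
    have hse : (B:ℝ)/(k₂:ℝ) ≤ ((B:ℝ)+1)/(k₂:ℝ) := by
      apply (div_le_div_iff_of_pos_right hK₂).mpr; linarith
    have hgN : g ((4*k₁).toNat) = ((B:ℝ)+1)/(k₂:ℝ) := by
      simp only [hg, hN]
      rw [show (4*(k₁:ℝ))/(k₁:ℝ) = 4 by field_simp]
      rw [max_eq_right hs4, min_eq_left he4]
    have hg0 : g 0 = (B:ℝ)/(k₂:ℝ) := by
      simp only [hg, Nat.cast_zero, zero_div]
      rw [max_eq_left hs0, min_eq_right hse]
    rw [hgN, hg0]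
    field_simp
    ring
end
end
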